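/- arXiv:1004.1623 — 6 statements merged into one kernel-verified Lean document; each statement's English description precedes it below -/
import Mathlib

section
/- If α is a Θ_ν-distributed complex random variable (ν > 1) and p, q are nonnegative integers, then E[α^p ᾱ^q] = δ_{pq} · 2^p p! / ((ν+1)(ν+3)···(ν+2p-1)). -/
open MeasureTheory

theorem stmt1 (ν : ℝ) (hν : 1 < ν) (p q : ℕ) :
    (((ν - 1) / (2 * Real.pi) : ℝ) : ℂ) *
      ∫ z in {z : ℂ | ‖z‖ < 1},
        z ^ p * (starRingEnd ℂ z) ^ q * (((1 - ‖z‖ ^ 2 : ℝ) ^ ((ν - 3) / 2) : ℝ) : ℂ) =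
    if p = q then
      ((2 : ℂ) ^ p * (Nat.factorial p : ℂ)) / ∏ j ∈ Finset.range p, ((ν : ℂ) + 2 * j + 1)
    else 0 := by
  have pi_pos := Real.pi_pos
  set s : ℝ := (ν - 3) / 2 with hs
  set F : ℂ → ℂ := fun z => z ^ p * (starRingEnd ℂ z) ^ q *
      (((1 - ‖z‖ ^ 2 : ℝ) ^ s : ℝ) : ℂ) with hF
  set S : Set ℂ := {z : ℂ | ‖z‖ < 1} with hSdef
  have hSm : MeasurableSet S := measurableSet_lt measurable_norm measurable_const
  set f : ℝ → ℂ := fun r => (r : ℂ) ^ (p + q + 1) * (((1 - r ^ 2 : ℝ) ^ s : ℝ) : ℂ) with hf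
  set g : ℝ → ℂ := fun θ => Complex.exp (((p : ℂ) - q) * θ * Complex.I) with hg
  have key : (∫ z in S, F z) =
      (∫ r in Set.Ioo (0:ℝ) 1, f r) * ∫ θ in Set.Ioo (-Real.pi) Real.pi, g θ := by
    rw [← integral_indicator hSm, ← Complex.integral_comp_polarCoord_symm]
    have heq : ∀ x ∈ polarCoord.target,
        x.1 • S.indicator F (Complex.polarCoord.symm x) =
        (Set.Ioo (0:ℝ) 1 ×ˢ Set.Ioo (-Real.pi) Real.pi).indicator
          (fun x : ℝ × ℝ => f x.1 * g x.2) x := by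
      rintro ⟨r, θ⟩ hx
      rw [polarCoord_target] at hx
      obtain ⟨hr, hθ⟩ := hx
      simp only [Set.mem_Ioi] at hr
      have hsymm : Complex.polarCoord.symm (r, θ) = (r : ℂ) * Complex.exp (θ * Complex.I) := by
        rw [Complex.polarCoord_symm_apply, Complex.exp_mul_I]
        push_cast
        ring
      have hnorm : ‖(r:ℂ) * Complex.exp ((θ:ℂ) * Complex.I)‖ = r := by
        rw [norm_mul, Complex.norm_exp]
        simp [abs_of_pos hr]
      have hexp : Complex.exp ((θ:ℂ) * Complex.I) ^ p *
          (starRingEnd ℂ (Complex.exp ((θ:ℂ) * Complex.I))) ^ q = g θ := by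
        rw [← Complex.exp_conj]
        simp only [map_mul, Complex.conj_I, Complex.conj_ofReal]
        rw [← Complex.exp_nat_mul, ← Complex.exp_nat_mul, ← Complex.exp_add, hg]
        congr 1
        ring
      by_cases h1 : r < 1
      · rw [Set.indicator_of_mem, Set.indicator_of_mem]
        · simp only [hF, hsymm, hnorm]
          rw [Complex.real_smul]
          simp only [map_mul, Complex.conj_ofReal, mul_pow, hf]
          linear_combination ((r:ℂ) ^ (p + q + 1) * (((1 - r ^ 2 : ℝ) ^ s : ℝ) : ℂ)) * hexp
        · exact ⟨⟨hr, h1⟩, hθ⟩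
        · rw [hSdef, Set.mem_setOf_eq, hsymm, hnorm]; exact h1
      · rw [Set.indicator_of_notMem, Set.indicator_of_notMem, smul_zero]
        · intro hmem; exact h1 hmem.1.2
        · rw [hSdef, Set.mem_setOf_eq, hsymm, hnorm]; exact h1
    rw [setIntegral_congr_fun (polarCoord.open_target.measurableSet) heq]
    rw [setIntegral_indicator (measurableSet_Ioo.prod measurableSet_Ioo)]
    have : polarCoord.target ∩ (Set.Ioo (0:ℝ) 1 ×ˢ Set.Ioo (-Real.pi) Real.pi) =
        Set.Ioo (0:ℝ) 1 ×ˢ Set.Ioo (-Real.pi) Real.pi := by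
      rw [polarCoord_target, Set.prod_inter_prod, Set.inter_self,
        Set.Ioi_inter_Ioo, max_eq_right le_rfl]
    rw [this, Measure.volume_eq_prod, setIntegral_prod_mul]
  rw [key]
  by_cases hpq : p = q
  · subst hpq
    rw [if_pos rfl]
    -- angular integral
    have hA : (∫ θ in Set.Ioo (-Real.pi) Real.pi, g θ) = ((2 * Real.pi : ℝ) : ℂ) := by
      simp only [hg, sub_self, zero_mul, Complex.exp_zero]
      rw [setIntegral_const, Real.volume_real_Ioo_of_le (by linarith)]
      rw [Complex.real_smul, mul_one]
      push_cast
      ring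
    -- radial integral
    set u0 : ℂ := (((ν - 1) / 2 : ℝ) : ℂ) with hu0
    have hu0re : 0 < u0.re := by
      rw [hu0, Complex.ofReal_re]; linarith
    set g0 : ℝ → ℂ := fun u => (u : ℂ) ^ p * (((1 - u) ^ s : ℝ) : ℂ) with hg0
    have himg : (fun x : ℝ => x ^ 2) '' Set.Ioo 0 1 = Set.Ioo 0 1 := by
      ext y
      constructor
      · rintro ⟨x, ⟨hx0, hx1⟩, rfl⟩
        exact ⟨by positivity, pow_lt_one₀ hx0.le hx1 two_ne_zero⟩
      · rintro ⟨hy0, hy1⟩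
        refine ⟨Real.sqrt y, ⟨Real.sqrt_pos.2 hy0, ?_⟩, Real.sq_sqrt hy0.le⟩
        rw [show (1 : ℝ) = Real.sqrt 1 by simp]
        exact Real.sqrt_lt_sqrt hy0.le hy1
    have hinj : Set.InjOn (fun x : ℝ => x ^ 2) (Set.Ioo 0 1) := by
      rintro a ⟨ha0, _⟩ b ⟨hb0, _⟩ h
      simp only at h
      nlinarith
    have hchg := integral_image_eq_integral_abs_deriv_smul (f' := fun x : ℝ => 2 * x)
      measurableSet_Ioo (fun x _ => by simpa using (hasDerivAt_pow 2 x).hasDerivWithinAt)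
      hinj g0
    rw [himg] at hchg
    have hrhs : (∫ x in Set.Ioo (0:ℝ) 1, |2 * x| • g0 (x ^ 2)) =
        2 * ∫ x in Set.Ioo (0:ℝ) 1, f x := by
      rw [← integral_const_mul]
      refine setIntegral_congr_fun measurableSet_Ioo fun x hx => ?_
      obtain ⟨hx0, hx1⟩ := hx
      rw [abs_of_pos (by linarith), Complex.real_smul]
      simp only [hg0, hf]
      push_cast
      ring
    rw [hrhs] at hchg
    have hbeta : (∫ u in Set.Ioo (0:ℝ) 1, g0 u) =
        Complex.betaIntegral ((p : ℂ) + 1) u0 := by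
      rw [Complex.betaIntegral, intervalIntegral.integral_of_le zero_le_one,
        integral_Ioc_eq_integral_Ioo]
      refine setIntegral_congr_fun measurableSet_Ioo fun u hu => ?_
      obtain ⟨hu0', hu1⟩ := hu
      simp only [hg0, add_sub_cancel_right]
      rw [Complex.cpow_natCast]
      congr 1
      have h1u : (0:ℝ) ≤ 1 - u := by linarith
      rw [Complex.ofReal_cpow h1u s]
      push_cast
      congr 1
      rw [hu0, hs]
      push_cast
      ring
    have heval : Complex.betaIntegral ((p : ℂ) + 1) u0 =
        (p.factorial : ℂ) / ∏ j ∈ Finset.range (p + 1), (u0 + j) :=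
      (Complex.betaIntegral_symm _ _).symm.trans
        (Complex.betaIntegral_eval_nat_add_one_right hu0re p)
    have hR : (∫ x in Set.Ioo (0:ℝ) 1, f x) =
        ((p.factorial : ℂ) / ∏ j ∈ Finset.range (p + 1), (u0 + j)) / 2 := by
      rw [← heval, ← hbeta, hchg]
      ring
    rw [hR, hA, Finset.prod_range_succ']
    simp only [Nat.cast_zero, add_zero]
    have hprod : ∏ j ∈ Finset.range p, ((ν : ℂ) + 2 * j + 1) =
        2 ^ p * ∏ j ∈ Finset.range p, (u0 + ((j : ℂ) + 1)) := by
      rw [show (2:ℂ) ^ p = ∏ _j ∈ Finset.range p, (2:ℂ) by simp, ← Finset.prod_mul_distrib]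
      refine Finset.prod_congr rfl fun j _ => ?_
      rw [hu0]
      push_cast
      ring
    have hfac_ne : ∀ j : ℕ, u0 + ((j : ℂ) + 1) ≠ 0 := by
      intro j h
      have : (u0 + ((j : ℂ) + 1)).re = 0 := by rw [h]; simp
      rw [hu0] at this
      simp only [Complex.add_re, Complex.ofReal_re, Complex.add_re, Complex.natCast_re,
        Complex.one_re] at this
      have : (0:ℝ) < (ν - 1) / 2 + (j + 1) := by positivity
      linarith
    have hprod_ne : (∏ j ∈ Finset.range p, (u0 + ((j : ℂ) + 1))) ≠ 0 :=
      Finset.prod_ne_zero_iff.2 fun j _ => hfac_ne j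
    have hprod_ne' : (∏ j ∈ Finset.range p, (u0 + ((j : ℕ) : ℂ) + 1)) ≠ 0 := by
      convert hprod_ne using 2 with j
      ring
    have hu0_ne : u0 ≠ 0 := by
      intro h
      rw [hu0] at h
      have := congrArg Complex.re h
      simp only [Complex.ofReal_re, Complex.zero_re] at this
      linarith
    have hpi_ne : (Real.pi : ℂ) ≠ 0 := by
      exact_mod_cast Real.pi_ne_zero
    have hnu : ((ν : ℂ) - 1) = 2 * u0 := by
      rw [hu0]; push_cast; ring
    rw [hprod]
    push_cast
    rw [hnu]
    have h2p : (2:ℂ) ^ p ≠ 0 := pow_ne_zero _ two_ne_zero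
    field_simp
  · rw [if_neg hpq]
    have hc : ((p : ℂ) - q) * Complex.I ≠ 0 := by
      refine mul_ne_zero (sub_ne_zero.2 ?_) Complex.I_ne_zero
      exact_mod_cast hpq
    have hA : (∫ θ in Set.Ioo (-Real.pi) Real.pi, g θ) = 0 := by
      rw [← integral_Ioc_eq_integral_Ioo,
        ← intervalIntegral.integral_of_le (by linarith : -Real.pi ≤ Real.pi)]
      simp only [hg]
      have : ∀ θ : ℝ, ((p : ℂ) - q) * θ * Complex.I = (((p : ℂ) - q) * Complex.I) * θ := by
        intro θ; ring
      simp_rw [this]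
      rw [integral_exp_mul_complex hc]
      set n : ℤ := (p : ℤ) - q with hn
      have hper : Complex.exp ((((p : ℂ) - q) * Complex.I) * (Real.pi : ℂ)) =
          Complex.exp ((((p : ℂ) - q) * Complex.I) * ((-Real.pi : ℝ) : ℂ)) := by
        rw [show (((p : ℂ) - q) * Complex.I) * (Real.pi : ℂ) =
            (((p : ℂ) - q) * Complex.I) * ((-Real.pi : ℝ) : ℂ) +
            (n : ℂ) * (2 * (Real.pi : ℂ) * Complex.I) by rw [hn]; push_cast; ring,
          Complex.exp_add, Complex.exp_int_mul_two_pi_mul_I, mul_one]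
      rw [hper, sub_self, zero_div]
    rw [hA, mul_zero, mul_zero]
end

section
/- Gauss's summation formula: for ν > 1 and complex λ, μ with Re(λ+μ) > -1, the hypergeometric series ∑_{p=0}^∞ (-λ)_p(-μ)_p / (p! ((ν+1)/2)_p) converges and equals Γ(λ+μ+(ν+1)/2)Γ((ν+1)/2) / (Γ(λ+(ν+1)/2)Γ(μ+(ν+1)/2)). -/
open Polynomial Finset Filter Complex Asymptotics Topology
namespace GaussAux

noncomputable def poch (x : ℂ) (n : ℕ) : ℂ := (ascPochhammer ℂ n).eval x
lemma poch_zero (x : ℂ) : poch x 0 = 1 := by simp [poch]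
lemma poch_succ (x : ℂ) (n : ℕ) : poch x (n + 1) = poch x n * (x + n) :=
  ascPochhammer_succ_eval n x
lemma poch_succ_left (x : ℂ) (n : ℕ) : poch x (n + 1) = x * poch (x + 1) n := by
  simp [poch, ascPochhammer_succ_left, Polynomial.eval_comp, mul_comm]
lemma poch_prod (x : ℂ) (n : ℕ) : poch x n = ∏ j ∈ range n, (x + j) := by
  induction n with
  | zero => simp [poch_zero]
  | succ n ih => rw [poch_succ, ih, prod_range_succ]
lemma poch_ne_zero {x : ℂ} (hx : ∀ m : ℕ, x ≠ -(m : ℂ)) (n : ℕ) : poch x n ≠ 0 := by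
  rw [poch_prod]
  exact Finset.prod_ne_zero_iff.2 fun j _ hj => hx j (by linear_combination hj)
lemma re_pos_ne_neg_nat {x : ℂ} (hx : 0 < x.re) (m : ℕ) : x ≠ -(m : ℂ) := by
  intro hxm
  rw [hxm] at hx
  simp only [Complex.neg_re, Complex.natCast_re] at hx
  have : (0:ℝ) ≤ (m:ℝ) := Nat.cast_nonneg m
  linarith
lemma poch_eq_zero {x : ℂ} {m : ℕ} (hx : x = -(m : ℂ)) {n : ℕ} (hmn : m < n) :
    poch x n = 0 := by
  rw [poch_prod]
  exact Finset.prod_eq_zero (Finset.mem_range.2 hmn) (by rw [hx]; ring)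
lemma poch_ofReal (r : ℝ) (n : ℕ) :
    poch (r : ℂ) n = (((ascPochhammer ℝ n).eval r : ℝ) : ℂ) := by
  induction n with
  | zero => simp [poch_zero]
  | succ n ih => rw [poch_succ, ascPochhammer_succ_eval n r, ih]; push_cast; ring
lemma gammaSeq_eq (x : ℂ) (n : ℕ) :
    Complex.GammaSeq x n = (n : ℂ) ^ x * (Nat.factorial n : ℂ) / poch x (n + 1) := by
  rw [Complex.GammaSeq, poch_prod]
noncomputable def T (a b z : ℂ) (k : ℕ) : ℂ :=
  poch a k * poch b k / ((Nat.factorial k : ℂ) * poch z k)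
lemma T_zero (a b z : ℂ) : T a b z 0 = 1 := by simp [T, poch_zero]

lemma T_succ (a b z : ℂ) (hz : ∀ m : ℕ, z ≠ -(m : ℂ)) (k : ℕ) :
    ((k : ℂ) + 1) * (z + k) * T a b z (k + 1) = (a + k) * (b + k) * T a b z k := by
  have hP := poch_ne_zero hz k
  have hzk : z + (k : ℂ) ≠ 0 := fun h => hz k (by linear_combination h)
  have hk : (Nat.factorial k : ℂ) ≠ 0 := Nat.cast_ne_zero.2 (Nat.factorial_ne_zero k)
  have hD1 : ((Nat.factorial (k+1) : ℂ)) * poch z (k+1) ≠ 0 :=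
    mul_ne_zero (Nat.cast_ne_zero.2 (Nat.factorial_ne_zero _)) (poch_ne_zero hz _)
  have hD2 : ((Nat.factorial k : ℂ)) * poch z k ≠ 0 :=
    mul_ne_zero hk hP
  rw [T, T, ← mul_div_assoc, ← mul_div_assoc, div_eq_div_iff hD1 hD2,
    poch_succ a, poch_succ b, poch_succ z, Nat.factorial_succ]
  push_cast
  ring

lemma T_shift (a b z : ℂ) (hz : ∀ m : ℕ, z ≠ -(m : ℂ)) (k : ℕ) :
    (z + k) * T a b (z + 1) k = z * T a b z k := by
  have hP := poch_ne_zero hz k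
  have hP1 : poch (z + 1) k ≠ 0 := by
    refine poch_ne_zero (fun m h => hz (m + 1) ?_) k
    push_cast; linear_combination h
  have hz0 : z ≠ 0 := fun h => hz 0 (by simp [h])
  have hk : (Nat.factorial k : ℂ) ≠ 0 := Nat.cast_ne_zero.2 (Nat.factorial_ne_zero k)
  have hrel : z * poch (z + 1) k = poch z k * (z + k) := by
    rw [← poch_succ_left, poch_succ]
  have hD1 : ((Nat.factorial k : ℂ)) * poch (z+1) k ≠ 0 := mul_ne_zero hk hP1
  have hD2 : ((Nat.factorial k : ℂ)) * poch z k ≠ 0 := mul_ne_zero hk hP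
  rw [T, T, ← mul_div_assoc, ← mul_div_assoc, div_eq_div_iff hD1 hD2]
  linear_combination (-(poch a k * poch b k * (Nat.factorial k : ℂ))) * hrel

lemma T_eq_gammaSeq (a b z : ℂ) (ha : ∀ m : ℕ, a ≠ -(m : ℂ)) (hb : ∀ m : ℕ, b ≠ -(m : ℂ))
    (hz : ∀ m : ℕ, z ≠ -(m : ℂ)) {n : ℕ} (hn : 1 ≤ n) :
    T a b z (n + 1) * ((n : ℂ) + 1) * (Complex.GammaSeq a n * Complex.GammaSeq b n) =
      (n : ℂ) ^ (a + b - z) * Complex.GammaSeq z n := by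
  have hn0 : (n : ℂ) ≠ 0 := Nat.cast_ne_zero.2 (by omega)
  have hPz := poch_ne_zero hz (n + 1)
  have hPa := poch_ne_zero ha (n + 1)
  have hPb := poch_ne_zero hb (n + 1)
  have hpow : (n : ℂ) ^ a * (n : ℂ) ^ b = (n : ℂ) ^ (a + b - z) * (n : ℂ) ^ z := by
    rw [← Complex.cpow_add _ _ hn0, ← Complex.cpow_add _ _ hn0]
    ring_nf
  have hF : (Nat.factorial n : ℂ) ≠ 0 := Nat.cast_ne_zero.2 (Nat.factorial_ne_zero n)
  have hF1 : (Nat.factorial (n+1) : ℂ) ≠ 0 := Nat.cast_ne_zero.2 (Nat.factorial_ne_zero _)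
  have hn1 : ((n : ℂ) + 1) ≠ 0 := by
    have : (0:ℝ) < ((n:ℂ)+1).re := by simp; positivity
    intro hh; rw [hh] at this; simp at this
  have hD : poch a (n+1) * poch b (n+1) * (n:ℂ) * (Nat.factorial n : ℂ) * poch z (n+1)
      + poch a (n+1) * poch b (n+1) * (Nat.factorial n : ℂ) * poch z (n+1) ≠ 0 := by
    have : poch a (n+1) * poch b (n+1) * (n:ℂ) * (Nat.factorial n : ℂ) * poch z (n+1)
      + poch a (n+1) * poch b (n+1) * (Nat.factorial n : ℂ) * poch z (n+1)
      = poch a (n+1) * poch b (n+1) * ((n:ℂ)+1) * (Nat.factorial n : ℂ) * poch z (n+1) := by ring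
    rw [this]
    exact mul_ne_zero (mul_ne_zero (mul_ne_zero (mul_ne_zero hPa hPb) hn1) hF) hPz
  rw [T, gammaSeq_eq, gammaSeq_eq, gammaSeq_eq, Nat.factorial_succ]
  push_cast
  field_simp [hD]
  linear_combination hpow


lemma isBigO_T (a b z : ℂ) (hz : ∀ m : ℕ, z ≠ -(m : ℂ)) :
    (fun n : ℕ => T a b z (n + 1)) =O[atTop] fun n : ℕ => (n : ℝ) ^ ((a + b - z).re - 1) := by
  by_cases ha : ∀ m : ℕ, a ≠ -(m : ℂ)
  · by_cases hb : ∀ m : ℕ, b ≠ -(m : ℂ)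
    · -- main case
      set L := Complex.Gamma z / (Complex.Gamma a * Complex.Gamma b) with hLdef
      have hL : Tendsto (fun n => Complex.GammaSeq z n /
          (Complex.GammaSeq a n * Complex.GammaSeq b n)) atTop (𝓝 L) :=
        (Complex.GammaSeq_tendsto_Gamma z).div
          ((Complex.GammaSeq_tendsto_Gamma a).mul (Complex.GammaSeq_tendsto_Gamma b))
          (mul_ne_zero (Complex.Gamma_ne_zero ha) (Complex.Gamma_ne_zero hb))
      have hbound : ∀ᶠ n in atTop, ‖Complex.GammaSeq z n /
          (Complex.GammaSeq a n * Complex.GammaSeq b n)‖ ≤ ‖L‖ + 1 :=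
        (hL.norm).eventually_le_const (lt_add_one _)
      rw [isBigO_iff]
      refine ⟨‖L‖ + 1, ?_⟩
      filter_upwards [eventually_ge_atTop 1, hbound] with n hn hQ
      have hn0 : (n : ℂ) ≠ 0 := Nat.cast_ne_zero.2 (by omega)
      have hnR : (0 : ℝ) < (n : ℝ) := by exact_mod_cast Nat.pos_of_ne_zero (by omega)
      have hF : (Nat.factorial n : ℂ) ≠ 0 := Nat.cast_ne_zero.2 (Nat.factorial_ne_zero n)
      have hGa : Complex.GammaSeq a n ≠ 0 := by
        rw [gammaSeq_eq]
        exact div_ne_zero (mul_ne_zero (fun h => hn0 ((Complex.cpow_eq_zero_iff _ _).1 h).1) hF)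
          (poch_ne_zero ha _)
      have hGb : Complex.GammaSeq b n ≠ 0 := by
        rw [gammaSeq_eq]
        exact div_ne_zero (mul_ne_zero (fun h => hn0 ((Complex.cpow_eq_zero_iff _ _).1 h).1) hF)
          (poch_ne_zero hb _)
      have hn1 : ((n : ℂ) + 1) ≠ 0 := by
        have : ((n:ℂ)+1) = ((n+1 : ℕ) : ℂ) := by push_cast; ring
        rw [this]; exact Nat.cast_ne_zero.2 (by omega)
      have hTeq : T a b z (n + 1) = ((n : ℂ) ^ (a + b - z) / ((n : ℂ) + 1)) *
          (Complex.GammaSeq z n / (Complex.GammaSeq a n * Complex.GammaSeq b n)) := by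
        rw [div_mul_div_comm, eq_div_iff (mul_ne_zero hn1 (mul_ne_zero hGa hGb)), ← mul_assoc]
        exact T_eq_gammaSeq a b z ha hb hz hn
      rw [hTeq, norm_mul, norm_div]
      have hcpow : ‖(n : ℂ) ^ (a + b - z)‖ = (n : ℝ) ^ ((a + b - z).re) := by
        exact_mod_cast Complex.norm_cpow_eq_rpow_re_of_pos hnR (a + b - z)
      have hnorm1 : ‖(n : ℂ) + 1‖ = (n : ℝ) + 1 := by
        have : ((n:ℂ)+1) = ((n+1 : ℕ) : ℂ) := by push_cast; ring
        rw [this, Complex.norm_natCast]; push_cast; ring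
      rw [hcpow, hnorm1]
      have key : (n : ℝ) ^ (a + b - z).re / ((n : ℝ) + 1) ≤ (n : ℝ) ^ ((a + b - z).re - 1) := by
        rw [Real.rpow_sub hnR, Real.rpow_one]
        gcongr
        linarith
      have hg : ‖(n : ℝ) ^ ((a + b - z).re - 1)‖ = (n : ℝ) ^ ((a + b - z).re - 1) :=
        Real.norm_of_nonneg (Real.rpow_nonneg hnR.le _)
      rw [hg]
      calc (n : ℝ) ^ (a + b - z).re / ((n : ℝ) + 1) *
            ‖Complex.GammaSeq z n / (Complex.GammaSeq a n * Complex.GammaSeq b n)‖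
          ≤ (n : ℝ) ^ (a + b - z).re / ((n : ℝ) + 1) * (‖L‖ + 1) := by
            apply mul_le_mul_of_nonneg_left hQ
            positivity
        _ ≤ (n : ℝ) ^ ((a + b - z).re - 1) * (‖L‖ + 1) := by
            apply mul_le_mul_of_nonneg_right key
            positivity
        _ = (‖L‖ + 1) * (n : ℝ) ^ ((a + b - z).re - 1) := by ring
    · push_neg at hb
      obtain ⟨m, hm⟩ := hb
      rw [isBigO_iff]
      refine ⟨1, ?_⟩
      filter_upwards [eventually_ge_atTop m] with n hn
      have : T a b z (n + 1) = 0 := by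
        rw [T, poch_eq_zero hm (show m < n + 1 by omega)]
        simp
      rw [this, norm_zero]
      positivity
  · push_neg at ha
    obtain ⟨m, hm⟩ := ha
    rw [isBigO_iff]
    refine ⟨1, ?_⟩
    filter_upwards [eventually_ge_atTop m] with n hn
    have : T a b z (n + 1) = 0 := by
      rw [T, poch_eq_zero hm (show m < n + 1 by omega)]
      simp
    rw [this, norm_zero]
    positivity

lemma re_sub_eq (a b z : ℂ) : (a + b - z).re = -(z - a - b).re := by
  simp [Complex.sub_re, Complex.add_re]; ring

lemma summable_T_norm (a b z : ℂ) (hz : ∀ m : ℕ, z ≠ -(m : ℂ)) (h : 0 < (z - a - b).re) :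
    Summable (fun k => ‖T a b z k‖) := by
  rw [← summable_nat_add_iff 1]
  refine summable_of_isBigO_nat (g := fun n => (n : ℝ) ^ ((a + b - z).re - 1)) ?_ ?_
  · refine Real.summable_nat_rpow.2 ?_
    rw [re_sub_eq]
    linarith
  · exact (isBigO_T a b z hz).norm_left

lemma summable_T (a b z : ℂ) (hz : ∀ m : ℕ, z ≠ -(m : ℂ)) (h : 0 < (z - a - b).re) :
    Summable (T a b z) :=
  (summable_T_norm a b z hz h).of_norm

lemma tendsto_natCast_atTop' : Tendsto (fun n : ℕ => (n : ℝ)) atTop atTop :=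
  tendsto_natCast_atTop_atTop

lemma tendsto_w (a b z : ℂ) (hz1 : ∀ m : ℕ, z + 1 ≠ -(m : ℂ)) (h : 0 < (z - a - b).re) :
    Tendsto (fun k : ℕ => (k : ℂ) * (z + k) * T a b (z + 1) k) atTop (𝓝 0) := by
  rw [← tendsto_add_atTop_iff_nat 1]
  have hpoly : (fun n : ℕ => (((n+1 : ℕ)) : ℂ) * (z + ((n+1 : ℕ) : ℂ))) =O[atTop]
      fun n : ℕ => (n : ℝ) ^ (2 : ℝ) := by
    rw [isBigO_iff]
    refine ⟨2 * (‖z‖ + 2), ?_⟩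
    filter_upwards [eventually_ge_atTop 1] with n hn
    have hnR : (1 : ℝ) ≤ (n : ℝ) := by exact_mod_cast hn
    have h1 : ‖(((n+1 : ℕ)) : ℂ)‖ = (n : ℝ) + 1 := by
      rw [Complex.norm_natCast]; push_cast; ring
    have h2 : ‖z + ((n+1 : ℕ) : ℂ)‖ ≤ ‖z‖ + ((n : ℝ) + 1) := by
      refine le_trans (norm_add_le _ _) ?_
      rw [Complex.norm_natCast]; push_cast; exact le_refl _
    rw [norm_mul, h1]
    have hg : ‖(n : ℝ) ^ (2 : ℝ)‖ = (n : ℝ) ^ (2 : ℝ) :=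
      Real.norm_of_nonneg (Real.rpow_nonneg (by linarith) _)
    rw [hg]
    have hsq : (n : ℝ) ^ (2 : ℝ) = (n : ℝ) * (n : ℝ) := by
      rw [show (2:ℝ) = ((2:ℕ):ℝ) by norm_num, Real.rpow_natCast]; ring
    rw [hsq]
    calc ((n : ℝ) + 1) * ‖z + ((n+1 : ℕ) : ℂ)‖ ≤ ((n : ℝ) + 1) * (‖z‖ + ((n : ℝ) + 1)) := by
          apply mul_le_mul_of_nonneg_left h2; linarith
      _ ≤ 2 * (‖z‖ + 2) * ((n : ℝ) * (n : ℝ)) := by nlinarith [norm_nonneg z, hnR, mul_nonneg (norm_nonneg z) (sub_nonneg.2 hnR), mul_le_mul_of_nonneg_left hnR (norm_nonneg z), sq_nonneg ((n:ℝ) - 1)]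
  have hz1' : ∀ m : ℕ, z + 1 ≠ -(m : ℂ) := hz1
  have hO : (fun n : ℕ => ((((n+1 : ℕ)) : ℂ) * (z + ((n+1 : ℕ) : ℂ))) * T a b (z+1) (n+1))
      =O[atTop] fun n : ℕ => (n : ℝ) ^ (2 : ℝ) * (n : ℝ) ^ ((a + b - (z+1)).re - 1) :=
    hpoly.mul (isBigO_T a b (z+1) hz1')
  have hg0 : Tendsto (fun n : ℕ => (n : ℝ) ^ (2 : ℝ) * (n : ℝ) ^ ((a + b - (z+1)).re - 1))
      atTop (𝓝 0) := by
    have heq : (fun n : ℕ => (n : ℝ) ^ (2 : ℝ) * (n : ℝ) ^ ((a + b - (z+1)).re - 1))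
        =ᶠ[atTop] (fun n : ℕ => (n : ℝ) ^ (-(z - a - b).re)) := by
      filter_upwards [eventually_ge_atTop 1] with n hn
      have hnR : (0 : ℝ) < (n : ℝ) := by exact_mod_cast Nat.pos_of_ne_zero (by omega)
      rw [← Real.rpow_add hnR]
      congr 1
      have : (a + b - (z+1)).re = (a+b-z).re - 1 := by
        simp [Complex.sub_re, Complex.add_re, Complex.one_re]
        ring
      rw [this, re_sub_eq]
      ring
    have hlim : Tendsto (fun n : ℕ => (n : ℝ) ^ (-(z - a - b).re)) atTop (𝓝 0) :=
      (tendsto_rpow_neg_atTop h).comp tendsto_natCast_atTop'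
    exact Tendsto.congr' heq.symm hlim
  have := hO.trans_tendsto hg0
  refine this.congr fun n => ?_
  push_cast
  ring

lemma re_add_one (z a b : ℂ) : (z + 1 - a - b).re = (z - a - b).re + 1 := by
  simp [Complex.sub_re, Complex.add_re, Complex.one_re]
  ring

lemma contiguous (a b z : ℂ) (hz : ∀ m : ℕ, z ≠ -(m : ℂ)) (hz1 : ∀ m : ℕ, z + 1 ≠ -(m : ℂ))
    (h : 0 < (z - a - b).re) :
    z * (z - a - b) * ∑' k, T a b z k = (z - a) * (z - b) * ∑' k, T a b (z + 1) k := by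
  have hS1 : Summable (T a b z) := summable_T a b z hz h
  have h1 : 0 < (z + 1 - a - b).re := by rw [re_add_one]; linarith
  have hS2 : Summable (T a b (z + 1)) := summable_T a b (z + 1) hz1 h1
  set w : ℕ → ℂ := fun k => (k : ℂ) * (z + k) * T a b (z + 1) k with hw
  have hptwise : ∀ k : ℕ, z * (z - a - b) * T a b z k - (z - a) * (z - b) * T a b (z + 1) k
      = w k - w (k + 1) := by
    intro k
    have hshift : (z + k) * T a b (z + 1) k = z * T a b z k := T_shift a b z hz k
    have hsucc : ((k : ℂ) + 1) * ((z + 1) + k) * T a b (z + 1) (k + 1)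
        = (a + k) * (b + k) * T a b (z + 1) k := T_succ a b (z + 1) hz1 k
    have hw1 : w (k + 1) = (a + k) * (b + k) * T a b (z + 1) k := by
      rw [hw]
      simp only
      rw [← hsucc]
      push_cast
      ring
    rw [hw1, hw]
    simp only
    linear_combination (-(z - a - b)) * hshift
  set E : ℕ → ℂ := fun k => z * (z - a - b) * T a b z k - (z - a) * (z - b) * T a b (z + 1) k
    with hE
  have hSE : Summable E := (hS1.mul_left _).sub (hS2.mul_left _)
  have hps : Tendsto (fun n => ∑ i ∈ range n, E i) atTop (𝓝 (∑' k, E k)) :=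
    hSE.hasSum.tendsto_sum_nat
  have hw0 : w 0 = 0 := by rw [hw]; simp
  have hpsw : ∀ n, ∑ i ∈ range n, E i = - w n := by
    intro n
    rw [Finset.sum_congr rfl (fun i _ => hptwise i), Finset.sum_range_sub' w n, hw0]
    ring
  have hps0 : Tendsto (fun n => ∑ i ∈ range n, E i) atTop (𝓝 0) := by
    have hwt : Tendsto w atTop (𝓝 0) := tendsto_w a b z hz1 h
    have := hwt.neg
    rw [neg_zero] at this
    exact Tendsto.congr (fun n => (hpsw n).symm) this
  have htsum : ∑' k, E k = 0 := tendsto_nhds_unique hps hps0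
  rw [hE] at htsum
  rw [Summable.tsum_sub (hS1.mul_left _) (hS2.mul_left _), tsum_mul_left, tsum_mul_left] at htsum
  linear_combination htsum

lemma iterate (a b : ℂ) (c : ℝ) (hc : 1 < c) (h : 0 < ((c:ℂ) - a - b).re) (n : ℕ) :
    poch (c:ℂ) n * poch ((c:ℂ) - a - b) n * ∑' k, T a b (c:ℂ) k
      = poch ((c:ℂ) - a) n * poch ((c:ℂ) - b) n * ∑' k, T a b ((c:ℂ) + n) k := by
  induction n with
  | zero => simp [poch_zero]
  | succ n ih =>
    have hre : ((c:ℂ) + n).re = c + n := by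
      simp [Complex.add_re, Complex.ofReal_re, Complex.natCast_re]
    have hzre : (0:ℝ) < ((c:ℂ) + n).re := by rw [hre]; positivity
    have hz : ∀ m : ℕ, (c:ℂ) + n ≠ -(m : ℂ) := re_pos_ne_neg_nat hzre
    have hz1 : ∀ m : ℕ, (c:ℂ) + n + 1 ≠ -(m : ℂ) := by
      refine re_pos_ne_neg_nat ?_
      have : ((c:ℂ) + n + 1).re = c + n + 1 := by
        simp [Complex.add_re, Complex.ofReal_re, Complex.natCast_re, Complex.one_re]
      rw [this]; positivity
    have hσ : 0 < ((c:ℂ) + n - a - b).re := by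
      have : ((c:ℂ) + n - a - b).re = ((c:ℂ) - a - b).re + n := by
        simp [Complex.sub_re, Complex.add_re, Complex.ofReal_re, Complex.natCast_re]
        ring
      rw [this]
      have : (0:ℝ) ≤ (n:ℝ) := Nat.cast_nonneg n
      linarith
    have hcontig := contiguous a b ((c:ℂ) + n) hz hz1 hσ
    have hcast : (c:ℂ) + ((n+1 : ℕ) : ℂ) = (c:ℂ) + n + 1 := by push_cast; ring
    rw [hcast]
    rw [poch_succ, poch_succ, poch_succ, poch_succ]
    linear_combination (((c:ℂ) + n) * (((c:ℂ) - a - b) + n)) * ih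
      + poch ((c:ℂ) - a) n * poch ((c:ℂ) - b) n * hcontig

lemma rpoch_le (c : ℝ) (hc : 0 < c) (n k : ℕ) :
    (c + n) * (ascPochhammer ℝ (k+1)).eval c ≤ c * (ascPochhammer ℝ (k+1)).eval (c + n) := by
  induction k with
  | zero =>
    simp [ascPochhammer_one]
    nlinarith [Nat.cast_nonneg (α := ℝ) n]
  | succ k ih =>
    rw [ascPochhammer_succ_eval (k+1) c, ascPochhammer_succ_eval (k+1) (c + (n:ℝ))]
    have h1 : (0:ℝ) < (ascPochhammer ℝ (k+1)).eval c := ascPochhammer_pos (k+1) c hc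
    have h2 : (0:ℝ) < (ascPochhammer ℝ (k+1)).eval (c + n) :=
      ascPochhammer_pos (k+1) (c+n) (by positivity)
    have h3 : (0:ℝ) ≤ (n:ℝ) := Nat.cast_nonneg n
    have h4 : (0:ℝ) < c + (k:ℝ) + 1 := by positivity
    calc (c + n) * ((ascPochhammer ℝ (k+1)).eval c * (c + (k+1 : ℕ)))
        = ((c + n) * (ascPochhammer ℝ (k+1)).eval c) * (c + (k+1:ℕ)) := by ring
      _ ≤ (c * (ascPochhammer ℝ (k+1)).eval (c+n)) * (c + (k+1:ℕ)) := by
          apply mul_le_mul_of_nonneg_right ih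
          push_cast; positivity
      _ ≤ (c * (ascPochhammer ℝ (k+1)).eval (c+n)) * ((c+n) + (k+1:ℕ)) := by
          apply mul_le_mul_of_nonneg_left
          · push_cast; linarith
          · positivity
      _ = c * ((ascPochhammer ℝ (k+1)).eval (c+n) * (c + n + (k+1:ℕ))) := by ring

lemma norm_T_real (a b : ℂ) (r : ℝ) (hr : 0 < r) (k : ℕ) :
    ‖T a b (r:ℂ) k‖ = ‖poch a k‖ * ‖poch b k‖
      / (Nat.factorial k * (ascPochhammer ℝ k).eval r) := by
  rw [T, norm_div, norm_mul, norm_mul, poch_ofReal, Complex.norm_natCast,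
    Complex.norm_real, Real.norm_of_nonneg (ascPochhammer_pos k r hr).le]

lemma T_le (a b : ℂ) (c : ℝ) (hc : 0 < c) (n k : ℕ) :
    ‖T a b ((c:ℂ) + n) (k+1)‖ ≤ (c / (c + n)) * ‖T a b (c:ℂ) (k+1)‖ := by
  have hcast : (c:ℂ) + n = (((c + n : ℝ)) : ℂ) := by push_cast; ring
  have hcn : (0:ℝ) < c + n := by positivity
  rw [hcast, norm_T_real a b _ hcn, norm_T_real a b c hc]
  have h1 : (0:ℝ) < (ascPochhammer ℝ (k+1)).eval c := ascPochhammer_pos (k+1) c hc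
  have h2 : (0:ℝ) < (ascPochhammer ℝ (k+1)).eval (c + n) := ascPochhammer_pos (k+1) _ hcn
  have hfac : (0:ℝ) < (Nat.factorial (k+1) : ℝ) := by positivity
  rw [div_mul_div_comm, div_le_div_iff₀ (by positivity) (by positivity)]
  have key := mul_le_mul_of_nonneg_left (rpoch_le c hc n k)
    (show (0:ℝ) ≤ ‖poch a (k+1)‖ * ‖poch b (k+1)‖ * (Nat.factorial (k+1) : ℝ) by positivity)
  nlinarith [key]

lemma tendsto_G_one (a b : ℂ) (c : ℝ) (hc : 1 < c) (h : 0 < ((c:ℂ) - a - b).re) :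
    Tendsto (fun n : ℕ => ∑' k, T a b ((c:ℂ) + n) k) atTop (𝓝 1) := by
  have hc0 : (0:ℝ) < c := by linarith
  have hSnorm : Summable (fun k => ‖T a b (c:ℂ) k‖) :=
    summable_T_norm a b (c:ℂ) (re_pos_ne_neg_nat (by simp [Complex.ofReal_re]; linarith)) h
  have hSnorm1 : Summable (fun k => ‖T a b (c:ℂ) (k+1)‖) := by
    rw [← summable_nat_add_iff 1] at hSnorm
    exact hSnorm
  set S : ℝ := ∑' k, ‖T a b (c:ℂ) (k+1)‖ with hSdef
  have key : ∀ n : ℕ, ‖(∑' k, T a b ((c:ℂ) + n) k) - 1‖ ≤ (c / (c + n)) * S := by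
    intro n
    have hre : ((c:ℂ) + n).re = c + n := by
      simp [Complex.add_re, Complex.ofReal_re, Complex.natCast_re]
    have hzre : (0:ℝ) < ((c:ℂ) + n).re := by rw [hre]; positivity
    have hz : ∀ m : ℕ, (c:ℂ) + n ≠ -(m : ℂ) := re_pos_ne_neg_nat hzre
    have hσ : 0 < ((c:ℂ) + n - a - b).re := by
      have : ((c:ℂ) + n - a - b).re = ((c:ℂ) - a - b).re + n := by
        simp [Complex.sub_re, Complex.add_re, Complex.ofReal_re, Complex.natCast_re]
        ring
      rw [this]
      have : (0:ℝ) ≤ (n:ℝ) := Nat.cast_nonneg n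
      linarith
    have hSn : Summable (T a b ((c:ℂ) + n)) := summable_T a b _ hz hσ
    have hSnnorm : Summable (fun k => ‖T a b ((c:ℂ) + n) k‖) := summable_T_norm a b _ hz hσ
    have hSnnorm1 : Summable (fun k => ‖T a b ((c:ℂ) + n) (k+1)‖) := by
      rw [← summable_nat_add_iff 1] at hSnnorm; exact hSnnorm
    rw [Summable.tsum_eq_zero_add hSn, T_zero]
    have : (1 : ℂ) + (∑' k, T a b ((c:ℂ)+n) (k+1)) - 1 = ∑' k, T a b ((c:ℂ)+n) (k+1) := by
      ring
    rw [this]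
    calc ‖∑' k, T a b ((c:ℂ)+n) (k+1)‖ ≤ ∑' k, ‖T a b ((c:ℂ)+n) (k+1)‖ :=
          norm_tsum_le_tsum_norm hSnnorm1
      _ ≤ ∑' k, (c / (c + n)) * ‖T a b (c:ℂ) (k+1)‖ := by
          apply Summable.tsum_le_tsum (fun k => T_le a b c hc0 n k) hSnnorm1 (hSnorm1.mul_left _)
      _ = (c / (c + n)) * S := tsum_mul_left
  have hg0 : Tendsto (fun n : ℕ => (c / (c + n)) * S) atTop (𝓝 0) := by
    have : (fun n : ℕ => (c / (c + n)) * S) = fun n : ℕ => (c * S) / (c + n) := by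
      funext n; ring
    rw [this]
    apply Filter.Tendsto.div_atTop (tendsto_const_nhds)
    apply tendsto_atTop_add_const_left
    exact tendsto_natCast_atTop'
  have hf0 : Tendsto (fun n : ℕ => (∑' k, T a b ((c:ℂ) + n) k) - 1) atTop (𝓝 0) :=
    squeeze_zero_norm key hg0
  have := hf0.add_const 1
  rw [zero_add] at this
  refine this.congr fun n => ?_
  ring

lemma tendsto_P (a b : ℂ) (c : ℝ) (hc : 1 < c) (h : 0 < ((c:ℂ) - a - b).re) :
    Tendsto (fun n : ℕ => poch ((c:ℂ) - a) n * poch ((c:ℂ) - b) n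
        / (poch (c:ℂ) n * poch ((c:ℂ) - a - b) n)) atTop
      (𝓝 (Complex.Gamma (c:ℂ) * Complex.Gamma ((c:ℂ) - a - b)
        / (Complex.Gamma ((c:ℂ) - a) * Complex.Gamma ((c:ℂ) - b)))) := by
  have hcre : (0:ℝ) < ((c:ℂ)).re := by simp [Complex.ofReal_re]; linarith
  have hzc : ∀ m : ℕ, (c:ℂ) ≠ -(m : ℂ) := re_pos_ne_neg_nat hcre
  have hzσ : ∀ m : ℕ, (c:ℂ) - a - b ≠ -(m : ℂ) := re_pos_ne_neg_nat h
  by_cases hca : ∀ m : ℕ, (c:ℂ) - a ≠ -(m : ℂ)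
  · by_cases hcb : ∀ m : ℕ, (c:ℂ) - b ≠ -(m : ℂ)
    · -- main case
      have hlim : Tendsto (fun n : ℕ => Complex.GammaSeq (c:ℂ) n
          * Complex.GammaSeq ((c:ℂ) - a - b) n
          / (Complex.GammaSeq ((c:ℂ) - a) n * Complex.GammaSeq ((c:ℂ) - b) n)) atTop
          (𝓝 (Complex.Gamma (c:ℂ) * Complex.Gamma ((c:ℂ) - a - b)
            / (Complex.Gamma ((c:ℂ) - a) * Complex.Gamma ((c:ℂ) - b)))) :=
        ((Complex.GammaSeq_tendsto_Gamma _).mul (Complex.GammaSeq_tendsto_Gamma _)).div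
          ((Complex.GammaSeq_tendsto_Gamma _).mul (Complex.GammaSeq_tendsto_Gamma _))
          (mul_ne_zero (Complex.Gamma_ne_zero hca) (Complex.Gamma_ne_zero hcb))
      rw [← tendsto_add_atTop_iff_nat 1]
      refine Tendsto.congr' ?_ hlim
      filter_upwards [eventually_ge_atTop 1] with n hn
      have hn0 : (n : ℂ) ≠ 0 := Nat.cast_ne_zero.2 (by omega)
      have hF : (Nat.factorial n : ℂ) ≠ 0 := Nat.cast_ne_zero.2 (Nat.factorial_ne_zero n)
      have hPc := poch_ne_zero hzc (n+1)
      have hPσ := poch_ne_zero hzσ (n+1)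
      have hPca := poch_ne_zero hca (n+1)
      have hPcb := poch_ne_zero hcb (n+1)
      have hGca : Complex.GammaSeq ((c:ℂ) - a) n ≠ 0 := by
        rw [gammaSeq_eq]
        exact div_ne_zero (mul_ne_zero (fun hh => hn0 ((Complex.cpow_eq_zero_iff _ _).1 hh).1) hF)
          hPca
      have hGcb : Complex.GammaSeq ((c:ℂ) - b) n ≠ 0 := by
        rw [gammaSeq_eq]
        exact div_ne_zero (mul_ne_zero (fun hh => hn0 ((Complex.cpow_eq_zero_iff _ _).1 hh).1) hF)
          hPcb
      have hpow : (n : ℂ) ^ ((c:ℂ) - a) * (n : ℂ) ^ ((c:ℂ) - b)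
          = (n : ℂ) ^ ((c:ℂ)) * (n : ℂ) ^ ((c:ℂ) - a - b) := by
        rw [← Complex.cpow_add _ _ hn0, ← Complex.cpow_add _ _ hn0]
        ring_nf
      rw [div_eq_div_iff (mul_ne_zero hGca hGcb) (mul_ne_zero hPc hPσ)]
      rw [gammaSeq_eq, gammaSeq_eq, gammaSeq_eq, gammaSeq_eq]
      field_simp
      linear_combination (-1 : ℂ) * hpow
    · push_neg at hcb
      obtain ⟨m, hm⟩ := hcb
      have hG0 : Complex.Gamma ((c:ℂ) - b) = 0 := by
        rw [hm]; exact Complex.Gamma_neg_nat_eq_zero m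
      rw [hG0, mul_zero, div_zero]
      refine Tendsto.congr' ?_ tendsto_const_nhds
      filter_upwards [eventually_ge_atTop (m+1)] with n hn
      rw [poch_eq_zero hm (show m < n by omega)]
      simp
  · push_neg at hca
    obtain ⟨m, hm⟩ := hca
    have hG0 : Complex.Gamma ((c:ℂ) - a) = 0 := by
      rw [hm]; exact Complex.Gamma_neg_nat_eq_zero m
    rw [hG0, zero_mul, div_zero]
    refine Tendsto.congr' ?_ tendsto_const_nhds
    filter_upwards [eventually_ge_atTop (m+1)] with n hn
    rw [poch_eq_zero hm (show m < n by omega)]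
    simp

lemma main (a b : ℂ) (c : ℝ) (hc : 1 < c) (h : 0 < ((c:ℂ) - a - b).re) :
    HasSum (T a b (c:ℂ)) (Complex.Gamma (c:ℂ) * Complex.Gamma ((c:ℂ) - a - b)
      / (Complex.Gamma ((c:ℂ) - a) * Complex.Gamma ((c:ℂ) - b))) := by
  have hcre : (0:ℝ) < ((c:ℂ)).re := by simp [Complex.ofReal_re]; linarith
  have hzc : ∀ m : ℕ, (c:ℂ) ≠ -(m : ℂ) := re_pos_ne_neg_nat hcre
  have hS : Summable (T a b (c:ℂ)) := summable_T a b _ hzc h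
  have hzσ : ∀ m : ℕ, (c:ℂ) - a - b ≠ -(m : ℂ) := re_pos_ne_neg_nat h
  have heq : ∀ n : ℕ, (poch ((c:ℂ) - a) n * poch ((c:ℂ) - b) n
      / (poch (c:ℂ) n * poch ((c:ℂ) - a - b) n)) * (∑' k, T a b ((c:ℂ) + n) k)
      = ∑' k, T a b (c:ℂ) k := by
    intro n
    have hnz : poch (c:ℂ) n * poch ((c:ℂ) - a - b) n ≠ 0 :=
      mul_ne_zero (poch_ne_zero hzc n) (poch_ne_zero hzσ n)
    rw [div_mul_eq_mul_div, ← iterate a b c hc h n, mul_comm, mul_div_assoc,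
      div_self hnz, mul_one]
  have hten : Tendsto (fun n : ℕ => (poch ((c:ℂ) - a) n * poch ((c:ℂ) - b) n
      / (poch (c:ℂ) n * poch ((c:ℂ) - a - b) n)) * (∑' k, T a b ((c:ℂ) + n) k)) atTop
      (𝓝 ((Complex.Gamma (c:ℂ) * Complex.Gamma ((c:ℂ) - a - b)
        / (Complex.Gamma ((c:ℂ) - a) * Complex.Gamma ((c:ℂ) - b))) * 1)) :=
    (tendsto_P a b c hc h).mul (tendsto_G_one a b c hc h)
  have hconst : Tendsto (fun _ : ℕ => ∑' k, T a b (c:ℂ) k) atTop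
      (𝓝 (∑' k, T a b (c:ℂ) k)) := tendsto_const_nhds
  have := tendsto_nhds_unique (hten.congr heq) hconst
  rw [mul_one] at this
  have hhs := hS.hasSum
  rw [← this] at hhs
  exact hhs

end GaussAux

theorem stmt3 (ν : ℝ) (hν : 1 < ν) (lam mu : ℂ) (h : (lam + mu).re > -1) :
    HasSum
      (fun p : ℕ =>
        Polynomial.eval (-lam) (ascPochhammer ℂ p) * Polynomial.eval (-mu) (ascPochhammer ℂ p) /
          ((Nat.factorial p : ℂ) * Polynomial.eval (((ν : ℂ) + 1) / 2) (ascPochhammer ℂ p)))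
      (Complex.Gamma (lam + mu + ((ν : ℂ) + 1) / 2) * Complex.Gamma (((ν : ℂ) + 1) / 2) /
        (Complex.Gamma (lam + ((ν : ℂ) + 1) / 2) * Complex.Gamma (mu + ((ν : ℂ) + 1) / 2))) := by
  set c : ℝ := (ν + 1) / 2 with hcdef
  have hc : 1 < c := by rw [hcdef]; linarith
  have hcast : ((ν : ℂ) + 1) / 2 = (c : ℂ) := by rw [hcdef]; push_cast; ring
  have hre : 0 < ((c:ℂ) - (-lam) - (-mu)).re := by
    have h1 : ((c:ℂ) - -lam - -mu).re = c + ((lam + mu).re) := by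
      simp [Complex.sub_re, Complex.ofReal_re, Complex.neg_re, Complex.add_re]
      ring
    rw [h1]
    linarith
  have hmain := GaussAux.main (-lam) (-mu) c hc hre
  have hfun : (fun p : ℕ =>
      Polynomial.eval (-lam) (ascPochhammer ℂ p) * Polynomial.eval (-mu) (ascPochhammer ℂ p) /
        ((Nat.factorial p : ℂ) * Polynomial.eval (((ν : ℂ) + 1) / 2) (ascPochhammer ℂ p)))
      = GaussAux.T (-lam) (-mu) (c:ℂ) := by
    funext p
    rw [GaussAux.T, GaussAux.poch, GaussAux.poch, GaussAux.poch, hcast]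
  rw [hfun, hcast]
  have hval : Complex.Gamma (lam + mu + (c:ℂ)) * Complex.Gamma ((c:ℂ)) /
      (Complex.Gamma (lam + (c:ℂ)) * Complex.Gamma (mu + (c:ℂ)))
      = Complex.Gamma ((c:ℂ)) * Complex.Gamma ((c:ℂ) - -lam - -mu) /
        (Complex.Gamma ((c:ℂ) - -lam) * Complex.Gamma ((c:ℂ) - -mu)) := by
    rw [show lam + mu + (c:ℂ) = (c:ℂ) - -lam - -mu by ring,
      show lam + (c:ℂ) = (c:ℂ) - -lam by ring,
      show mu + (c:ℂ) = (c:ℂ) - -mu by ring]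
    ring
  rw [hval]
  exact hmain
end

section
/- For β ∈ (0,∞) and integers 0 ≤ r ≤ R, C(R,r) · ∏_{k=0}^{n-2} [Γ(R+1+(β/2)(k+1)) Γ(1+(β/2)(k+1)) / (Γ(R-r+1+(β/2)(k+1)) Γ(r+1+(β/2)(k+1)))] = ∏_{p=1}^{r} [Γ(n+(2/β)(R-r+p)) Γ((2/β)p) / (Γ((2/β)(R-r+p)) Γ(n+(2/β)p))] for every integer n ≥ 1. -/
open Finset

lemma gamma_add_nat' (x : ℝ) (hx : 0 < x) (m : ℕ) :
    Real.Gamma (x + m) = (∏ j ∈ Finset.range m, (x + j)) * Real.Gamma x := by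
  induction m with
  | zero => simp
  | succ m ih =>
    have h1 : x + ((m : ℕ) + 1 : ℕ) = (x + m) + 1 := by push_cast; ring
    have h2 : x + (m : ℝ) ≠ 0 := by positivity
    rw [h1, Real.Gamma_add_one h2, Finset.prod_range_succ, ih]
    push_cast; ring

lemma aux_fact (a b : ℕ) :
    (∏ i ∈ Finset.range b, (a + 1 + i)) * a.factorial = (a + b).factorial := by
  induction b with
  | zero => simp
  | succ b ih =>
    rw [Finset.prod_range_succ, mul_right_comm, ih, show a + (b+1) = (a+b)+1 from rfl,
      Nat.factorial_succ]
    ring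

lemma choose_prod (R r : ℕ) (hr : r ≤ R) :
    (R.choose r : ℝ) = ∏ i ∈ Finset.range r, (((R : ℝ) - r + 1 + i) / (1 + i)) := by
  have h1 : (∏ i ∈ Finset.range r, ((R - r) + 1 + i)) * (R - r).factorial = R.factorial := by
    rw [aux_fact]; congr 1; omega
  have h2 := Nat.choose_mul_factorial_mul_factorial hr
  have h3 : R.choose r * r.factorial = ∏ i ∈ Finset.range r, ((R - r) + 1 + i) :=
    Nat.eq_of_mul_eq_mul_right (Nat.factorial_pos _) (h2.trans h1.symm)
  have h4 : (R.choose r : ℝ) * (r.factorial : ℝ)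
      = ∏ i ∈ Finset.range r, (((R : ℝ) - r + 1 + i)) := by
    have := congrArg (Nat.cast : ℕ → ℝ) h3
    push_cast [Nat.cast_sub hr] at this
    convert this using 2
  rw [Finset.prod_div_distrib, ← h4]
  have h5 : (∏ i ∈ Finset.range r, ((1 : ℝ) + i)) = (r.factorial : ℝ) := by
    rw [← Finset.prod_range_add_one_eq_factorial]
    push_cast
    exact Finset.prod_congr rfl fun i _ => by ring
  rw [h5]
  field_simp

theorem stmt5 (β : ℝ) (hβ : 0 < β) (R r : ℕ) (hr : r ≤ R) (n : ℕ) (hn : 1 ≤ n) :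
    (R.choose r : ℝ) *
      ∏ k ∈ Finset.range (n - 1),
        (Real.Gamma ((R : ℝ) + 1 + β / 2 * (k + 1)) * Real.Gamma (1 + β / 2 * (k + 1)) /
          (Real.Gamma ((R : ℝ) - r + 1 + β / 2 * (k + 1)) *
            Real.Gamma ((r : ℝ) + 1 + β / 2 * (k + 1)))) =
    ∏ p ∈ Finset.range r,
      (Real.Gamma ((n : ℝ) + 2 / β * ((R : ℝ) - r + (p + 1))) * Real.Gamma (2 / β * (p + 1)) /
        (Real.Gamma (2 / β * ((R : ℝ) - r + (p + 1))) *
          Real.Gamma ((n : ℝ) + 2 / β * (p + 1)))) := by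
  have hRr : (0:ℝ) ≤ (R : ℝ) - r := by
    have : (r:ℝ) ≤ R := Nat.cast_le.2 hr
    linarith
  -- rewrite left factors
  have hL : ∀ k : ℕ,
      Real.Gamma ((R : ℝ) + 1 + β / 2 * (k + 1)) * Real.Gamma (1 + β / 2 * (k + 1)) /
        (Real.Gamma ((R : ℝ) - r + 1 + β / 2 * (k + 1)) *
          Real.Gamma ((r : ℝ) + 1 + β / 2 * (k + 1)))
      = ∏ i ∈ Finset.range r,
          (((R:ℝ) - r + 1 + i + β/2*(k+1)) / (1 + i + β/2*(k+1))) := by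
    intro k
    have hb : (0:ℝ) < β/2*(k+1) := by positivity
    have hx1 : (0:ℝ) < (R:ℝ) - r + 1 + β/2*(k+1) := by linarith
    have hx2 : (0:ℝ) < 1 + β/2*(k+1) := by linarith
    have e1 : (R:ℝ) + 1 + β/2*(k+1) = ((R:ℝ) - r + 1 + β/2*(k+1)) + (r:ℕ) := by
      push_cast; ring
    have e2 : (r:ℝ) + 1 + β/2*(k+1) = (1 + β/2*(k+1)) + (r:ℕ) := by push_cast; ring
    rw [e1, e2, gamma_add_nat' _ hx1, gamma_add_nat' _ hx2, Finset.prod_div_distrib]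
    have hΓ1 := (Real.Gamma_pos_of_pos hx1).ne'
    have hΓ2 := (Real.Gamma_pos_of_pos hx2).ne'
    have hnum : (∏ j ∈ Finset.range r, (((R:ℝ) - r + 1 + β/2*(k+1)) + j))
        = ∏ i ∈ Finset.range r, ((R:ℝ) - r + 1 + i + β/2*(k+1)) :=
      Finset.prod_congr rfl fun i _ => by ring
    have hden : (∏ j ∈ Finset.range r, ((1 + β/2*(k+1)) + (j:ℝ)))
        = ∏ i ∈ Finset.range r, (1 + (i:ℝ) + β/2*(k+1)) :=
      Finset.prod_congr rfl fun i _ => by ring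
    have hdpos : (0:ℝ) < ∏ i ∈ Finset.range r, (1 + (i:ℝ) + β/2*(k+1)) :=
      Finset.prod_pos fun i _ => by positivity
    rw [← hnum, ← hden]
    field_simp
  -- rewrite right factors
  have hRt : ∀ p : ℕ,
      Real.Gamma ((n : ℝ) + 2 / β * ((R : ℝ) - r + (p + 1))) * Real.Gamma (2 / β * (p + 1)) /
        (Real.Gamma (2 / β * ((R : ℝ) - r + (p + 1))) *
          Real.Gamma ((n : ℝ) + 2 / β * (p + 1)))
      = ∏ j ∈ Finset.range n,
          (((R:ℝ) - r + 1 + p + β/2*j) / (1 + p + β/2*j)) := by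
    intro p
    have hy1 : (0:ℝ) < 2/β * ((R:ℝ) - r + (p+1)) := by
      apply mul_pos (by positivity); linarith [Nat.cast_nonneg (α := ℝ) p]
    have hy2 : (0:ℝ) < 2/β * ((p:ℝ)+1) := by positivity
    have e1 : (n:ℝ) + 2/β * ((R:ℝ) - r + (p+1)) = (2/β * ((R:ℝ) - r + (p+1))) + (n:ℕ) := by
      ring
    have e2 : (n:ℝ) + 2/β * ((p:ℝ)+1) = (2/β * ((p:ℝ)+1)) + (n:ℕ) := by ring
    rw [e1, e2, gamma_add_nat' _ hy1, gamma_add_nat' _ hy2, Finset.prod_div_distrib]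
    have hΓ1 := (Real.Gamma_pos_of_pos hy1).ne'
    have hΓ2 := (Real.Gamma_pos_of_pos hy2).ne'
    have hβ' : β ≠ 0 := hβ.ne'
    have hnum : (∏ j ∈ Finset.range n, ((2/β * ((R:ℝ) - r + (p+1))) + j))
        = ∏ j ∈ Finset.range n, (2/β * ((R:ℝ) - r + 1 + p + β/2*j)) :=
      Finset.prod_congr rfl fun j _ => by field_simp; ring
    have hden : (∏ j ∈ Finset.range n, ((2/β * ((p:ℝ)+1)) + j))
        = ∏ j ∈ Finset.range n, (2/β * (1 + (p:ℝ) + β/2*j)) :=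
      Finset.prod_congr rfl fun j _ => by field_simp; ring
    rw [hnum, hden, Finset.prod_mul_distrib, Finset.prod_mul_distrib]
    have hdpos : (0:ℝ) < ∏ j ∈ Finset.range n, (1 + (p:ℝ) + β/2*j) :=
      Finset.prod_pos fun j _ => by positivity
    have hcpos : (0:ℝ) < ∏ j ∈ Finset.range n, (2/β : ℝ) :=
      Finset.prod_pos fun j _ => by positivity
    rw [Finset.prod_div_distrib]
    field_simp
  rw [Finset.prod_congr rfl fun k _ => hL k, Finset.prod_congr rfl fun p _ => hRt p]
  rw [Finset.prod_comm]
  obtain ⟨m, rfl⟩ : ∃ m, n = m + 1 := ⟨n - 1, (Nat.succ_pred_eq_of_pos hn).symm⟩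
  rw [Nat.add_sub_cancel]
  rw [Finset.prod_congr rfl fun p (_ : p ∈ Finset.range r) =>
    Finset.prod_range_succ' (fun j => (((R:ℝ) - r + 1 + p + β/2*j) / (1 + p + β/2*j))) m]
  rw [Finset.prod_mul_distrib]
  have h0 : (∏ p ∈ Finset.range r, (((R:ℝ) - r + 1 + p + β/2*(0:ℕ)) / (1 + p + β/2*(0:ℕ))))
      = (R.choose r : ℝ) := by
    rw [choose_prod R r hr]
    exact Finset.prod_congr rfl fun p _ => by norm_num
  rw [h0, mul_comm]
  congr 1
  refine Finset.prod_congr rfl fun p _ => Finset.prod_congr rfl fun k _ => ?_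
  push_cast
  ring
end

section
/- For β ∈ (0,∞) and integers 0 ≤ r ≤ R, as n → ∞: n^{-2r(R-r)/β} · C(R,r) · ∏_{k=0}^{n-2} [Γ(R+1+(β/2)(k+1)) Γ(1+(β/2)(k+1)) / (Γ(R-r+1+(β/2)(k+1)) Γ(r+1+(β/2)(k+1)))] converges to C := ∏_{p=1}^{r} Γ((2/β)p) / Γ((2/β)(R-r+p)), with error O(1/n). -/
open Real Finset

lemma gamma_prod (x : ℝ) (hx : 0 < x) (n : ℕ) :
    Real.Gamma (x + n) = Real.Gamma x * ∏ i ∈ Finset.range n, (x + i) := by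
  induction n with
  | zero => simp
  | succ m ih =>
    have h1 : x + ((m : ℕ) + 1 : ℕ) = (x + m) + 1 := by push_cast; ring
    have h2 : (0:ℝ) < x + m := by positivity
    rw [h1, Real.Gamma_add_one h2.ne', ih, Finset.prod_range_succ]; ring

lemma exp_le_one_add (v : ℝ) : Real.exp v ≤ 1 + v * Real.exp v := by
  have h := Real.add_one_le_exp (-v)
  have h2 : Real.exp (-v) * Real.exp v = 1 := by rw [← Real.exp_add]; simp
  nlinarith [Real.exp_pos v]

lemma one_add_rpow_le (u s : ℝ) (hu : 0 ≤ u) (hs : 0 ≤ s) :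
    (1 + u) ^ s ≤ Real.exp (s * u) := by
  have h1 : (1 + u) ^ s ≤ (Real.exp u) ^ s :=
    Real.rpow_le_rpow (by linarith) (by linarith [Real.add_one_le_exp u]) hs
  have h2 : (Real.exp u) ^ s = Real.exp (s * u) := by
    rw [Real.rpow_def_of_pos (Real.exp_pos u), Real.log_exp, mul_comm]
  exact h1.trans_eq h2

lemma one_sub_le_rpow (u s : ℝ) (hu : 0 ≤ u) (hs : 0 ≤ s) :
    1 - s * u ≤ (1 + u) ^ (-s) := by
  have h0 : (0:ℝ) < 1 + u := by linarith
  have h1 : (1 + u) ^ (-s) = ((1 + u) ^ s)⁻¹ := by rw [Real.rpow_neg h0.le]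
  have h2 : (Real.exp (s * u))⁻¹ ≤ ((1 + u) ^ s)⁻¹ :=
    inv_anti₀ (Real.rpow_pos_of_pos h0 s) (one_add_rpow_le u s hu hs)
  have h3 : Real.exp (-(s*u)) = (Real.exp (s*u))⁻¹ := Real.exp_neg _
  have h4 : 1 - s * u ≤ Real.exp (-(s*u)) := by
    have := Real.add_one_le_exp (-(s*u)); linarith
  rw [h1]; exact h4.trans (h3.le.trans h2)

/-- Wendel-type quantitative bound: |Γ(x+d)/(x^d Γ(x)) - 1| ≤ C/x for x ≥ 1. -/
lemma gamma_ratio_bound (d : ℝ) (hd : 0 < d) :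
    ∃ C : ℝ, 0 ≤ C ∧ ∀ x : ℝ, 1 ≤ x →
      |Real.Gamma (x + d) / (x ^ d * Real.Gamma x) - 1| ≤ C / x := by
  set M : ℕ := ⌊d⌋₊ + 1 with hMdef
  have hdM : d < M := by
    have := Nat.lt_floor_add_one d
    push_cast [hMdef]; linarith
  have hM0 : (0:ℝ) < M := lt_trans hd hdM
  refine ⟨d * M * Real.exp (d * M) + M * M, by positivity, fun x hx => ?_⟩
  have hx0 : (0:ℝ) < x := by linarith
  have hGx : (0:ℝ) < Real.Gamma x := Real.Gamma_pos_of_pos hx0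
  have hGxd : (0:ℝ) < Real.Gamma (x + d) := Real.Gamma_pos_of_pos (by linarith)
  have hxd : (0:ℝ) < x ^ d := Real.rpow_pos_of_pos hx0 d
  set H : ℝ := Real.Gamma (x + d) / (x ^ d * Real.Gamma x) with hHdef
  have hb : d / M ∈ Set.Ioo (0:ℝ) 1 := ⟨by positivity, by rw [div_lt_one hM0]; exact hdM⟩
  have hab : (1 - d / M) + d / M = 1 := by ring
  -- products
  have hP : Real.Gamma (x + M) = Real.Gamma x * ∏ i ∈ Finset.range M, (x + i) :=
    gamma_prod x hx0 M
  have hQ : Real.Gamma ((x + d) + M) = Real.Gamma (x + d) * ∏ i ∈ Finset.range M, (x + d + i) :=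
    gamma_prod (x + d) (by linarith) M
  have hPl : (x:ℝ) ^ (M:ℝ) ≤ ∏ i ∈ Finset.range M, (x + i) := by
    rw [Real.rpow_natCast]
    calc (x:ℝ) ^ (M:ℕ) = ∏ _i ∈ Finset.range M, x := by rw [Finset.prod_const, Finset.card_range]
      _ ≤ ∏ i ∈ Finset.range M, (x + i) := by
          apply Finset.prod_le_prod (fun i _ => hx0.le) (fun i _ => by
            have : (0:ℝ) ≤ (i:ℝ) := Nat.cast_nonneg i; linarith)
  have hPu : ∏ i ∈ Finset.range M, (x + i) ≤ (x + M) ^ (M:ℝ) := by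
    rw [Real.rpow_natCast]
    calc ∏ i ∈ Finset.range M, (x + i) ≤ ∏ _i ∈ Finset.range M, (x + M) := by
          apply Finset.prod_le_prod (fun i _ => by positivity) (fun i hi => by
            have : (i:ℝ) ≤ M := by exact_mod_cast (Finset.mem_range.mp hi).le
            linarith)
      _ = (x + M) ^ (M:ℕ) := by rw [Finset.prod_const, Finset.card_range]
  have hQu : ∏ i ∈ Finset.range M, (x + d + i) ≤ (x + d + M) ^ (M:ℝ) := by
    rw [Real.rpow_natCast]
    calc ∏ i ∈ Finset.range M, (x + d + i) ≤ ∏ _i ∈ Finset.range M, (x + d + M) := by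
          apply Finset.prod_le_prod (fun i _ => by positivity) (fun i hi => by
            have : (i:ℝ) ≤ M := by exact_mod_cast (Finset.mem_range.mp hi).le
            linarith)
      _ = (x + d + M) ^ (M:ℕ) := by rw [Finset.prod_const, Finset.card_range]
  have hPpos : (0:ℝ) < ∏ i ∈ Finset.range M, (x + i) :=
    Finset.prod_pos (fun i _ => by positivity)
  have hQpos : (0:ℝ) < ∏ i ∈ Finset.range M, (x + d + i) :=
    Finset.prod_pos (fun i _ => by positivity)
  -- UPPER BOUND
  have key1 : Real.Gamma (x + d) ≤
      Real.Gamma x ^ (1 - d/M) * Real.Gamma (x + M) ^ (d/M) := by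
    have := Real.Gamma_mul_add_mul_le_rpow_Gamma_mul_rpow_Gamma
      (s := x) (t := x + M) hx0 (by linarith) (by linarith [hb.2]) hb.1 hab
    have harg : (1 - d/M) * x + d/M * (x + M) = x + d := by
      field_simp; ring
    rwa [harg] at this
  have upper : H ≤ (1 + M/x) ^ d := by
    have e1 : Real.Gamma x ^ (1 - d/M) * Real.Gamma (x + M) ^ (d/M)
        = Real.Gamma x * (∏ i ∈ Finset.range M, (x + i)) ^ (d/M) := by
      rw [hP, Real.mul_rpow hGx.le hPpos.le, ← mul_assoc, ← Real.rpow_add hGx, hab,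
        Real.rpow_one]
    have e2 : (∏ i ∈ Finset.range M, (x + i)) ^ (d/M) ≤ ((x + M) ^ (M:ℝ)) ^ (d/M) :=
      Real.rpow_le_rpow hPpos.le hPu (by positivity)
    have e3 : ((x + M) ^ (M:ℝ)) ^ (d/M) = (x + M) ^ d := by
      rw [← Real.rpow_mul (by positivity)]
      congr 1; field_simp
    have hGle : Real.Gamma (x + d) ≤ Real.Gamma x * (x + M) ^ d := by
      calc Real.Gamma (x + d) ≤ _ := key1
        _ = Real.Gamma x * (∏ i ∈ Finset.range M, (x + i)) ^ (d/M) := e1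
        _ ≤ Real.Gamma x * (x + M) ^ d := by
            exact mul_le_mul_of_nonneg_left (e2.trans_eq e3) hGx.le
    rw [hHdef, div_le_iff₀ (by positivity)]
    have e4 : (1 + M/x) ^ d * (x ^ d * Real.Gamma x) = Real.Gamma x * (x + M) ^ d := by
      have h5 : (1 + M/x) ^ d * x ^ d = (x + M) ^ d := by
        rw [← Real.mul_rpow (by positivity) hx0.le]
        congr 1; field_simp
      rw [← mul_assoc, h5]; ring
    rw [e4]; exact hGle
  -- LOWER BOUND
  have key2 : Real.Gamma (x + M) ≤
      Real.Gamma (x + d) ^ (d/M) * Real.Gamma ((x + d) + M) ^ (1 - d/M) := by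
    have := Real.Gamma_mul_add_mul_le_rpow_Gamma_mul_rpow_Gamma
      (s := x + d) (t := (x + d) + M) (a := d/M) (b := 1 - d/M)
      (by linarith) (by linarith) hb.1 (by linarith [hb.2]) (by ring)
    have harg : d/M * (x + d) + (1 - d/M) * ((x + d) + M) = x + M := by
      field_simp; ring
    rwa [harg] at this
  have lower : (1 + (d + M)/x) ^ (-((M:ℝ) - d)) ≤ H := by
    have e1 : Real.Gamma (x + d) ^ (d/M) * Real.Gamma ((x + d) + M) ^ (1 - d/M)
        = Real.Gamma (x + d) * (∏ i ∈ Finset.range M, (x + d + i)) ^ (1 - d/M) := by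
      rw [hQ, Real.mul_rpow hGxd.le hQpos.le, ← mul_assoc, ← Real.rpow_add hGxd]
      rw [show d/M + (1 - d/M) = 1 by ring, Real.rpow_one]
    have e2 : (∏ i ∈ Finset.range M, (x + d + i)) ^ (1 - d/M)
        ≤ ((x + d + M) ^ (M:ℝ)) ^ (1 - d/M) :=
      Real.rpow_le_rpow hQpos.le hQu (by linarith [hb.2])
    have e3 : ((x + d + M) ^ (M:ℝ)) ^ (1 - d/M) = (x + d + M) ^ ((M:ℝ) - d) := by
      rw [← Real.rpow_mul (by positivity)]
      congr 1; field_simp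
    have hGge : Real.Gamma x * (x:ℝ) ^ (M:ℝ)
        ≤ Real.Gamma (x + d) * (x + d + M) ^ ((M:ℝ) - d) := by
      calc Real.Gamma x * (x:ℝ) ^ (M:ℝ)
          ≤ Real.Gamma x * ∏ i ∈ Finset.range M, (x + i) := by
            exact mul_le_mul_of_nonneg_left hPl hGx.le
        _ = Real.Gamma (x + M) := hP.symm
        _ ≤ _ := key2
        _ = Real.Gamma (x + d) * (∏ i ∈ Finset.range M, (x + d + i)) ^ (1 - d/M) := e1
        _ ≤ Real.Gamma (x + d) * (x + d + M) ^ ((M:ℝ) - d) := by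
            exact mul_le_mul_of_nonneg_left (e2.trans_eq e3) hGxd.le
    -- H ≥ x^(M-d)/(x+d+M)^(M-d) = (1+(d+M)/x)^-(M-d)
    have hH : (x:ℝ) ^ ((M:ℝ) - d) / (x + d + M) ^ ((M:ℝ) - d) ≤ H := by
      rw [hHdef, div_le_div_iff₀ (by positivity) (by positivity)]
      have ex : (x:ℝ) ^ ((M:ℝ) - d) * (x ^ d * Real.Gamma x)
          = Real.Gamma x * (x:ℝ) ^ (M:ℝ) := by
        rw [← mul_assoc, ← Real.rpow_add hx0]
        ring_nf
      rw [ex]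
      calc Real.Gamma x * (x:ℝ) ^ (M:ℝ)
          ≤ Real.Gamma (x + d) * (x + d + M) ^ ((M:ℝ) - d) := hGge
        _ = Real.Gamma (x + d) * (x + d + M) ^ ((M:ℝ) - d) := rfl
    have e5 : (1 + (d + M)/x) ^ (-((M:ℝ) - d))
        = (x:ℝ) ^ ((M:ℝ) - d) / (x + d + M) ^ ((M:ℝ) - d) := by
      rw [show (1 + (d + M)/x) = (x + d + M)/x from by field_simp; ring,
        Real.rpow_neg (by positivity), Real.div_rpow (by positivity) hx0.le, inv_div]
    exact e5 ▸ hH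
  -- COMBINE
  rw [abs_le]
  constructor
  · -- -(C/x) ≤ H - 1
    have h1 : 1 - ((M:ℝ) - d) * ((d + M)/x) ≤ H :=
      le_trans (one_sub_le_rpow ((d + M)/x) ((M:ℝ) - d) (by positivity) (by linarith)) lower
    have h2 : ((M:ℝ) - d) * ((d + M)/x) = (((M:ℝ) - d) * (d + M))/x := by ring
    have h3 : (((M:ℝ) - d) * (d + M))/x ≤ (d * M * Real.exp (d * M) + M * M)/x := by
      gcongr
      nlinarith [Real.exp_pos (d*M), mul_pos hd hM0]
    rw [h2] at h1
    linarith
  · -- H - 1 ≤ C/x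
    have hu : H ≤ Real.exp (d * ((M:ℝ)/x)) :=
      upper.trans (one_add_rpow_le ((M:ℝ)/x) d (by positivity) hd.le)
    have hv : Real.exp (d * ((M:ℝ)/x)) ≤ 1 + (d * ((M:ℝ)/x)) * Real.exp (d * ((M:ℝ)/x)) :=
      exp_le_one_add _
    have hvle : d * ((M:ℝ)/x) ≤ d * M := by
      have hMx : (M:ℝ)/x ≤ M := by
        rw [div_le_iff₀ hx0]
        exact le_mul_of_one_le_right hM0.le hx
      exact mul_le_mul_of_nonneg_left hMx hd.le
    have hexp : Real.exp (d * ((M:ℝ)/x)) ≤ Real.exp (d * M) := Real.exp_le_exp.mpr hvle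
    have h4 : (d * ((M:ℝ)/x)) * Real.exp (d * ((M:ℝ)/x)) ≤ (d * M / x) * Real.exp (d * M) := by
      have e : d * ((M:ℝ)/x) = d * M / x := by ring
      rw [e] at hexp ⊢
      exact mul_le_mul_of_nonneg_left hexp (by positivity)
    have h5 : (d * M / x) * Real.exp (d * M) ≤ (d * M * Real.exp (d * M) + M * M)/x := by
      rw [div_mul_eq_mul_div, div_le_div_iff₀ hx0 hx0]
      nlinarith [Real.exp_pos (d*M), mul_pos hM0 hM0]
    linarith

/-- per-factor bound: |n^(-d) Γ(n+a+d)/Γ(n+a) - 1| ≤ C/n -/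
lemma h_factor_bound (a d : ℝ) (ha : 0 < a) (hd : 0 < d) :
    ∃ C : ℝ, 0 ≤ C ∧ ∀ n : ℕ, 1 ≤ n →
      |(n:ℝ) ^ (-d) * (Real.Gamma ((n:ℝ) + a + d) / Real.Gamma ((n:ℝ) + a)) - 1| ≤ C / n := by
  obtain ⟨C, hC0, hC⟩ := gamma_ratio_bound d hd
  refine ⟨Real.exp (a * d) * C + a * d * Real.exp (a * d), by positivity, fun n hn => ?_⟩
  have hn0 : (0:ℝ) < n := by exact_mod_cast hn
  have hn1 : (1:ℝ) ≤ n := by exact_mod_cast hn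
  set x : ℝ := (n:ℝ) + a with hxdef
  have hx1 : (1:ℝ) ≤ x := by simp only [hxdef]; linarith
  have hx0 : (0:ℝ) < x := by linarith
  have hH := hC x hx1
  set H : ℝ := Real.Gamma (x + d) / (x ^ d * Real.Gamma x) with hHdef
  have hHpos : 0 < H := by
    have := Real.Gamma_pos_of_pos (show (0:ℝ) < x + d by linarith)
    have := Real.Gamma_pos_of_pos hx0
    have := Real.rpow_pos_of_pos hx0 d
    positivity
  -- rewrite the expression
  have split : (n:ℝ) ^ (-d) * (Real.Gamma ((n:ℝ) + a + d) / Real.Gamma ((n:ℝ) + a))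
      = (1 + a/n) ^ d * H := by
    have e1 : (1 + a/(n:ℝ)) ^ d = x ^ d / (n:ℝ) ^ d := by
      rw [← Real.div_rpow hx0.le hn0.le]
      congr 1; field_simp; exact hxdef.symm
    have hGx : (0:ℝ) < Real.Gamma x := Real.Gamma_pos_of_pos hx0
    have hnd : (0:ℝ) < (n:ℝ) ^ d := Real.rpow_pos_of_pos hn0 d
    have hxd : (0:ℝ) < x ^ d := Real.rpow_pos_of_pos hx0 d
    rw [e1, hHdef, Real.rpow_neg hn0.le]
    have : (n:ℝ) + a + d = x + d := by rw [hxdef]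
    rw [this]
    field_simp
    ring
  rw [split]
  set P : ℝ := (1 + a/(n:ℝ)) ^ d with hPdef
  have han : (0:ℝ) < a / n := div_pos ha hn0
  have hP1 : (1:ℝ) ≤ P := by
    calc (1:ℝ) = (1:ℝ) ^ d := (Real.one_rpow d).symm
      _ ≤ P := Real.rpow_le_rpow zero_le_one (by linarith) hd.le
  set v : ℝ := d * (a / n) with hvdef
  have hv0 : (0:ℝ) ≤ v := by positivity
  have c1 : P ≤ Real.exp v := one_add_rpow_le (a/n) d han.le hd.le
  have c2 : Real.exp v ≤ 1 + v * Real.exp v := exp_le_one_add v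
  have hvad : v ≤ a * d := by
    have : a / n ≤ a := div_le_self ha.le hn1
    calc v = d * (a/n) := hvdef
      _ ≤ d * a := mul_le_mul_of_nonneg_left this hd.le
      _ = a * d := mul_comm d a
  have c3 : Real.exp v ≤ Real.exp (a*d) := Real.exp_le_exp.mpr hvad
  have hPle : P ≤ Real.exp (a*d) := c1.trans c3
  have c4 : v * Real.exp v ≤ (a*d*Real.exp (a*d))/n := by
    have h1 : v * Real.exp v ≤ v * Real.exp (a*d) := mul_le_mul_of_nonneg_left c3 hv0
    have h2 : v * Real.exp (a*d) = (a*d*Real.exp (a*d))/n := by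
      rw [hvdef]; ring
    linarith
  have b2 : P - 1 ≤ (a*d*Real.exp (a*d))/n := by linarith
  have hHb : |H - 1| ≤ C / n := by
    refine hH.trans ?_
    gcongr
    · linarith
  have b1 : P * |H - 1| ≤ Real.exp (a*d) * (C/(n:ℝ)) :=
    mul_le_mul hPle hHb (abs_nonneg _) (Real.exp_pos _).le
  have key : |P * H - 1| ≤ P * |H - 1| + (P - 1) := by
    have e : P * H - 1 = P * (H - 1) + (P - 1) := by ring
    rw [e]
    refine (abs_add_le _ _).trans ?_
    rw [abs_mul, abs_of_nonneg (by linarith : (0:ℝ) ≤ P),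
      abs_of_nonneg (by linarith : (0:ℝ) ≤ P - 1)]
  have e5 : (Real.exp (a*d) * C + a*d*Real.exp (a*d))/(n:ℝ)
      = Real.exp (a*d) * (C/(n:ℝ)) + (a*d*Real.exp (a*d))/(n:ℝ) := by ring
  linarith

/-- error propagation through a finite product -/
lemma prod_err (g : ℕ → ℝ) (c ε : ℝ) (hε : 0 ≤ ε) (hεc : ε ≤ c) (k : ℕ)
    (h : ∀ p < k, |g p - 1| ≤ ε) :
    |∏ p ∈ Finset.range k, g p - 1| ≤ (1 + c) ^ k * k * ε := by
  have hc : 0 ≤ c := hε.trans hεc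
  induction k with
  | zero => simp
  | succ m ih =>
    have hm : ∀ p < m, |g p - 1| ≤ ε := fun p hp => h p (hp.trans (Nat.lt_succ_self m))
    have ihm := ih hm
    have hgm : |g m - 1| ≤ ε := h m (Nat.lt_succ_self m)
    have hgabs : |g m| ≤ 1 + c := by
      have := abs_sub_abs_le_abs_sub (g m) 1
      simp only [abs_one] at this
      linarith
    rw [Finset.prod_range_succ]
    have step : |(∏ p ∈ Finset.range m, g p) * g m - 1|
        ≤ |g m| * |(∏ p ∈ Finset.range m, g p) - 1| + |g m - 1| := by
      have e2 : (∏ p ∈ Finset.range m, g p) * g m - 1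
          = g m * ((∏ p ∈ Finset.range m, g p) - 1) + (g m - 1) := by ring
      rw [e2]
      refine (abs_add_le _ _).trans ?_
      rw [abs_mul]
    have hpow : (1:ℝ) ≤ (1 + c) ^ (m+1) := one_le_pow₀ (by linarith)
    have hmono : (1 + c) ^ m ≤ (1 + c) ^ (m+1) :=
      pow_le_pow_right₀ (by linarith) (Nat.le_succ m)
    have t1 : |g m| * |(∏ p ∈ Finset.range m, g p) - 1| ≤ (1 + c) * ((1 + c) ^ m * m * ε) :=
      mul_le_mul hgabs ihm (abs_nonneg _) (by linarith)
    have t2 : (1 + c) * ((1 + c) ^ m * m * ε) = (1 + c) ^ (m+1) * m * ε := by ring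
    have t3 : ε ≤ (1 + c) ^ (m+1) * ε := le_mul_of_one_le_left hε hpow
    calc |(∏ p ∈ Finset.range m, g p) * g m - 1|
        ≤ |g m| * |(∏ p ∈ Finset.range m, g p) - 1| + |g m - 1| := step
      _ ≤ (1 + c) ^ (m+1) * m * ε + (1 + c) ^ (m+1) * ε := by
          rw [← t2] at *; linarith
      _ = (1 + c) ^ (m+1) * (m+1) * ε := by ring
      _ = (1 + c) ^ (m+1) * ((m:ℕ)+1 : ℕ) * ε := by push_cast; ring

/-- telescoping: ∏_{k<m} (a+d+(k+1))/(a+(k+1)) as Gamma ratios -/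
lemma prod_ratio (a d : ℝ) (ha : 0 < a) (hd : 0 ≤ d) (m : ℕ) :
    ∏ k ∈ Finset.range m, ((a + d + (k+1)) / (a + (k+1)))
      = (Real.Gamma (a+d+1+m) * Real.Gamma (a+1)) /
        (Real.Gamma (a+d+1) * Real.Gamma (a+1+m)) := by
  have h1 : Real.Gamma (a+d+1+(m:ℝ)) = Real.Gamma (a+d+1) * ∏ k ∈ Finset.range m, (a+d+1+k) :=
    gamma_prod (a+d+1) (by linarith) m
  have h2 : Real.Gamma (a+1+(m:ℝ)) = Real.Gamma (a+1) * ∏ k ∈ Finset.range m, (a+1+k) :=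
    gamma_prod (a+1) (by linarith) m
  have hG1 : (0:ℝ) < Real.Gamma (a+d+1) := Real.Gamma_pos_of_pos (by linarith)
  have hG2 : (0:ℝ) < Real.Gamma (a+1) := Real.Gamma_pos_of_pos (by linarith)
  have hp2 : (0:ℝ) < ∏ k ∈ Finset.range m, (a+1+k) :=
    Finset.prod_pos (fun k _ => by positivity)
  rw [h1, h2]
  rw [Finset.prod_div_distrib]
  have e1 : ∏ k ∈ Finset.range m, (a + d + ((k:ℝ)+1)) = ∏ k ∈ Finset.range m, (a+d+1+(k:ℝ)) :=
    Finset.prod_congr rfl (fun k _ => by ring)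
  have e2 : ∏ k ∈ Finset.range m, (a + ((k:ℝ)+1)) = ∏ k ∈ Finset.range m, (a+1+(k:ℝ)) :=
    Finset.prod_congr rfl (fun k _ => by ring)
  rw [e1, e2]
  field_simp

/-- ℕ: ∏_{p<r}(s+p+1) * s! = (s+r)! -/
lemma prod_shift_factorial (s r : ℕ) :
    (∏ p ∈ Finset.range r, (s + p + 1)) * s.factorial = (s + r).factorial := by
  induction r with
  | zero => simp
  | succ m ih =>
    rw [Finset.prod_range_succ, show s + (m+1) = (s + m) + 1 from rfl, Nat.factorial_succ]
    rw [← ih]; ring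

lemma main_identity (β : ℝ) (hβ : 0 < β) (R r : ℕ) (hr : r ≤ R) (n : ℕ) (hn : 1 ≤ n) :
    (n : ℝ) ^ (-(2 * (r : ℝ) * ((R : ℝ) - r) / β)) * (R.choose r : ℝ) *
        (∏ k ∈ Finset.range (n - 1),
          (Real.Gamma ((R : ℝ) + 1 + β / 2 * (k + 1)) * Real.Gamma (1 + β / 2 * (k + 1)) /
            (Real.Gamma ((R : ℝ) - r + 1 + β / 2 * (k + 1)) *
              Real.Gamma ((r : ℝ) + 1 + β / 2 * (k + 1)))))
    = (∏ p ∈ Finset.range r,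
          Real.Gamma (2 / β * (p + 1)) / Real.Gamma (2 / β * ((R : ℝ) - r + (p + 1)))) *
      ∏ p ∈ Finset.range r,
        ((n:ℝ) ^ (-(2 * ((R : ℝ) - r) / β)) *
          (Real.Gamma ((n:ℝ) + 2 * ((p:ℝ)+1) / β + 2 * ((R:ℝ) - r) / β) /
            Real.Gamma ((n:ℝ) + 2 * ((p:ℝ)+1) / β))) := by
  have hn0 : (0:ℝ) < n := by exact_mod_cast hn
  have hRr : (0:ℝ) ≤ (R:ℝ) - r := by
    have : (r:ℝ) ≤ R := by exact_mod_cast hr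
    linarith
  set d : ℝ := 2 * ((R:ℝ) - r) / β with hddef
  have hd0 : 0 ≤ d := by positivity
  set a : ℕ → ℝ := fun p => 2 * ((p:ℝ)+1) / β with hadef
  have ha : ∀ p : ℕ, 0 < a p := fun p => by
    simp only [hadef]; positivity
  -- Step 1: per-k factor as a product over p
  have step1 : ∀ k : ℕ,
      Real.Gamma ((R : ℝ) + 1 + β / 2 * (k + 1)) * Real.Gamma (1 + β / 2 * (k + 1)) /
        (Real.Gamma ((R : ℝ) - r + 1 + β / 2 * (k + 1)) *
          Real.Gamma ((r : ℝ) + 1 + β / 2 * (k + 1)))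
      = ∏ p ∈ Finset.range r,
          (((R:ℝ) - r + 1 + β / 2 * (k + 1) + p) / (1 + β / 2 * (k + 1) + p)) := by
    intro k
    set x : ℝ := β / 2 * ((k:ℝ) + 1) with hxdef
    have hx : 0 < x := by simp only [hxdef]; positivity
    have g1 : Real.Gamma ((R:ℝ) + 1 + x)
        = Real.Gamma ((R:ℝ) - r + 1 + x) * ∏ p ∈ Finset.range r, ((R:ℝ) - r + 1 + x + p) := by
      have h := gamma_prod ((R:ℝ) - r + 1 + x) (by linarith) r
      have e : (R:ℝ) - r + 1 + x + (r:ℝ) = (R:ℝ) + 1 + x := by ring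
      rw [e] at h; exact h
    have g2 : Real.Gamma ((r:ℝ) + 1 + x)
        = Real.Gamma (1 + x) * ∏ p ∈ Finset.range r, (1 + x + p) := by
      have h := gamma_prod (1 + x) (by linarith) r
      have e : 1 + x + (r:ℝ) = (r:ℝ) + 1 + x := by ring
      rw [e] at h; exact h
    have hG1 : Real.Gamma ((R:ℝ) - r + 1 + x) ≠ 0 :=
      (Real.Gamma_pos_of_pos (by linarith)).ne'
    have hG2 : Real.Gamma (1 + x) ≠ 0 := (Real.Gamma_pos_of_pos (by linarith)).ne'
    have hp2 : (∏ p ∈ Finset.range r, (1 + x + (p:ℝ))) ≠ 0 :=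
      (Finset.prod_pos (fun p _ => by positivity)).ne'
    rw [g1, g2, Finset.prod_div_distrib]
    field_simp
  -- rewrite the big product
  rw [Finset.prod_congr rfl (fun k _ => step1 k), Finset.prod_comm]
  -- Step 3: per-p inner product via telescoping
  have hcast : ((n - 1 : ℕ) : ℝ) = (n:ℝ) - 1 := by
    rw [Nat.cast_sub hn, Nat.cast_one]
  have step3 : ∀ p : ℕ,
      ∏ k ∈ Finset.range (n - 1),
        (((R:ℝ) - r + 1 + β / 2 * (k + 1) + p) / (1 + β / 2 * (k + 1) + p))
      = (Real.Gamma ((n:ℝ) + a p + d) * Real.Gamma (a p + 1)) /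
        (Real.Gamma (a p + d + 1) * Real.Gamma ((n:ℝ) + a p)) := by
    intro p
    have hterm : ∀ k : ℕ,
        ((R:ℝ) - r + 1 + β / 2 * (k + 1) + p) / (1 + β / 2 * (k + 1) + p)
        = (a p + d + ((k:ℝ)+1)) / (a p + ((k:ℝ)+1)) := by
      intro k
      have hnum : (R:ℝ) - r + 1 + β / 2 * (k + 1) + p = β/2 * (a p + d + ((k:ℝ)+1)) := by
        simp only [hadef, hddef]
        field_simp
        ring
      have hden : 1 + β / 2 * ((k:ℝ) + 1) + p = β/2 * (a p + ((k:ℝ)+1)) := by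
        simp only [hadef]
        field_simp
        ring
      rw [hnum, hden, mul_div_mul_left _ _ (by positivity : (β/2 : ℝ) ≠ 0)]
    rw [Finset.prod_congr rfl (fun k _ => hterm k), prod_ratio (a p) d (ha p) hd0]
    have e1 : a p + d + 1 + ((n-1:ℕ):ℝ) = (n:ℝ) + a p + d := by rw [hcast]; ring
    have e2 : a p + 1 + ((n-1:ℕ):ℝ) = (n:ℝ) + a p := by rw [hcast]; ring
    rw [e1, e2]
  rw [Finset.prod_congr rfl (fun p _ => step3 p)]
  -- Step 4: split the rpow
  have step4 : (n : ℝ) ^ (-(2 * (r : ℝ) * ((R : ℝ) - r) / β))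
      = ∏ _p ∈ Finset.range r, (n:ℝ) ^ (-d) := by
    rw [Finset.prod_const, Finset.card_range, ← Real.rpow_natCast ((n:ℝ) ^ (-d)) r,
      ← Real.rpow_mul hn0.le]
    congr 1
    simp only [hddef]
    ring
  rw [step4]
  -- Step 5: the constant identity
  have hchoose : (R.choose r : ℝ) * ∏ p ∈ Finset.range r, (((p:ℝ)+1) / ((R:ℝ) - r + ((p:ℝ)+1)))
      = 1 := by
    have hN : R.choose r * (∏ p ∈ Finset.range r, (p+1)) = ∏ p ∈ Finset.range r, ((R-r) + p + 1) := by
      have h2 := prod_shift_factorial (R - r) r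
      have h3 : (R - r) + r = R := Nat.sub_add_cancel hr
      have h4 := Nat.choose_mul_factorial_mul_factorial hr
      have h1 : ∏ p ∈ Finset.range r, (p+1) = r.factorial :=
        Finset.prod_range_add_one_eq_factorial r
      rw [h3] at h2
      apply Nat.eq_of_mul_eq_mul_right (Nat.factorial_pos (R - r))
      rw [h1, h4, ← h2]
    have hNr : (R.choose r : ℝ) * (∏ p ∈ Finset.range r, ((p:ℝ)+1))
        = ∏ p ∈ Finset.range r, ((R:ℝ) - r + ((p:ℝ)+1)) := by
      have hc := congrArg (fun m : ℕ => (m : ℝ)) hN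
      push_cast at hc
      exact hc.trans (Finset.prod_congr rfl fun p _ => by rw [Nat.cast_sub hr]; ring)
    have hch : (R.choose r : ℝ) ≠ 0 := Nat.cast_ne_zero.mpr (Nat.choose_pos hr).ne'
    have hpn : (∏ p ∈ Finset.range r, ((p:ℝ)+1)) ≠ 0 :=
      (Finset.prod_pos fun p _ => by positivity).ne'
    rw [Finset.prod_div_distrib, ← hNr, ← mul_div_assoc, div_self (mul_ne_zero hch hpn)]
  have step5 : (R.choose r : ℝ) * ∏ p ∈ Finset.range r,
        (Real.Gamma (a p + 1) / Real.Gamma (a p + d + 1))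
      = ∏ p ∈ Finset.range r,
          (Real.Gamma (2 / β * (p + 1)) / Real.Gamma (2 / β * ((R : ℝ) - r + (p + 1)))) := by
    have hper : ∀ p : ℕ, Real.Gamma (a p + 1) / Real.Gamma (a p + d + 1)
        = (((p:ℝ)+1) / ((R:ℝ) - r + ((p:ℝ)+1))) *
          (Real.Gamma (2 / β * (p + 1)) / Real.Gamma (2 / β * ((R : ℝ) - r + (p + 1)))) := by
      intro p
      have hap : a p = 2 / β * ((p:ℝ) + 1) := by simp only [hadef]; ring
      have hapd : a p + d = 2 / β * ((R:ℝ) - r + ((p:ℝ) + 1)) := by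
        simp only [hadef, hddef]; field_simp; ring
      have hg1 : Real.Gamma (a p + 1) = a p * Real.Gamma (a p) :=
        Real.Gamma_add_one (ha p).ne'
      have hg2 : Real.Gamma (a p + d + 1) = (a p + d) * Real.Gamma (a p + d) :=
        Real.Gamma_add_one (by have := ha p; positivity : (a p + d) ≠ 0)
      have hGp : Real.Gamma (a p) ≠ 0 := (Real.Gamma_pos_of_pos (ha p)).ne'
      have hGpd : Real.Gamma (a p + d) ≠ 0 :=
        (Real.Gamma_pos_of_pos (by have := ha p; positivity)).ne'
      have hrat : a p / (a p + d) = ((p:ℝ)+1) / ((R:ℝ) - r + ((p:ℝ)+1)) := by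
        simp only [hadef, hddef]
        rw [div_eq_div_iff (by positivity) (by positivity)]
        field_simp
        ring
      rw [hg1, hg2, ← hap, ← hapd, ← hrat, mul_div_mul_comm]
    rw [Finset.prod_congr rfl (fun p _ => hper p), Finset.prod_mul_distrib, ← mul_assoc,
      hchoose, one_mul]
  -- Final assembly
  have harg : ∀ p : ℕ, (n:ℝ) + 2 * ((p:ℝ)+1) / β = (n:ℝ) + a p := fun p => by
    simp only [hadef]
  have harg2 : ∀ p : ℕ, (n:ℝ) + 2 * ((p:ℝ)+1) / β + d = (n:ℝ) + a p + d := fun p => by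
    simp only [hadef]
  calc (∏ _p ∈ Finset.range r, (n:ℝ) ^ (-d)) * (R.choose r : ℝ) *
        ∏ p ∈ Finset.range r,
          (Real.Gamma ((n:ℝ) + a p + d) * Real.Gamma (a p + 1) /
            (Real.Gamma (a p + d + 1) * Real.Gamma ((n:ℝ) + a p)))
      = (R.choose r : ℝ) * ∏ p ∈ Finset.range r,
          ((n:ℝ) ^ (-d) * (Real.Gamma ((n:ℝ) + a p + d) * Real.Gamma (a p + 1) /
            (Real.Gamma (a p + d + 1) * Real.Gamma ((n:ℝ) + a p)))) := by
        rw [Finset.prod_mul_distrib]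
        ring
    _ = (R.choose r : ℝ) * ∏ p ∈ Finset.range r,
          ((Real.Gamma (a p + 1) / Real.Gamma (a p + d + 1)) *
            ((n:ℝ) ^ (-d) * (Real.Gamma ((n:ℝ) + a p + d) / Real.Gamma ((n:ℝ) + a p)))) := by
        apply congrArg
        apply Finset.prod_congr rfl
        intro p _
        have hGn1 : Real.Gamma ((n:ℝ) + a p) ≠ 0 :=
          (Real.Gamma_pos_of_pos (by have := ha p; positivity)).ne'
        have hGc1 : Real.Gamma (a p + d + 1) ≠ 0 :=
          (Real.Gamma_pos_of_pos (by have := ha p; positivity)).ne'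
        field_simp
    _ = ((R.choose r : ℝ) * ∏ p ∈ Finset.range r,
          (Real.Gamma (a p + 1) / Real.Gamma (a p + d + 1))) *
        ∏ p ∈ Finset.range r,
          ((n:ℝ) ^ (-d) * (Real.Gamma ((n:ℝ) + a p + d) / Real.Gamma ((n:ℝ) + a p))) := by
        rw [Finset.prod_mul_distrib]; ring
    _ = (∏ p ∈ Finset.range r,
          Real.Gamma (2 / β * (p + 1)) / Real.Gamma (2 / β * ((R : ℝ) - r + (p + 1)))) *
        ∏ p ∈ Finset.range r,
          ((n:ℝ) ^ (-d) * (Real.Gamma ((n:ℝ) + a p + d) / Real.Gamma ((n:ℝ) + a p))) := by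
        rw [step5]
    _ = (∏ p ∈ Finset.range r,
          Real.Gamma (2 / β * (p + 1)) / Real.Gamma (2 / β * ((R : ℝ) - r + (p + 1)))) *
        ∏ p ∈ Finset.range r,
          ((n:ℝ) ^ (-d) *
            (Real.Gamma ((n:ℝ) + 2 * ((p:ℝ)+1) / β + d) /
              Real.Gamma ((n:ℝ) + 2 * ((p:ℝ)+1) / β))) := by
        apply congrArg
        apply Finset.prod_congr rfl
        intro p _
        rw [harg2 p, harg p]


theorem stmt6 (β : ℝ) (hβ : 0 < β) (R r : ℕ) (hr : r ≤ R) :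
    ∃ C₀ : ℝ, ∀ n : ℕ, 1 ≤ n →
      |(n : ℝ) ^ (-(2 * (r : ℝ) * ((R : ℝ) - r) / β)) * (R.choose r : ℝ) *
          (∏ k ∈ Finset.range (n - 1),
            (Real.Gamma ((R : ℝ) + 1 + β / 2 * (k + 1)) * Real.Gamma (1 + β / 2 * (k + 1)) /
              (Real.Gamma ((R : ℝ) - r + 1 + β / 2 * (k + 1)) *
                Real.Gamma ((r : ℝ) + 1 + β / 2 * (k + 1))))) -
        ∏ p ∈ Finset.range r,
          Real.Gamma (2 / β * (p + 1)) / Real.Gamma (2 / β * ((R : ℝ) - r + (p + 1)))| ≤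
      C₀ / n := by
  rcases eq_or_lt_of_le hr with hEq | hlt
  · -- degenerate case r = R : the expression is identically L
    subst hEq
    refine ⟨0, fun n hn => ?_⟩
    have hterm : ∀ k : ℕ,
        Real.Gamma ((r:ℝ) + 1 + β / 2 * ((k:ℝ) + 1)) * Real.Gamma (1 + β / 2 * ((k:ℝ) + 1)) /
          (Real.Gamma ((r:ℝ) - r + 1 + β / 2 * ((k:ℝ) + 1)) *
            Real.Gamma ((r:ℝ) + 1 + β / 2 * ((k:ℝ) + 1))) = 1 := by
      intro k
      have hx : (0:ℝ) < β / 2 * ((k:ℝ) + 1) := by positivity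
      have e : (r:ℝ) - r + 1 + β / 2 * ((k:ℝ) + 1) = 1 + β / 2 * ((k:ℝ) + 1) := by ring
      rw [e, mul_comm (Real.Gamma (1 + β / 2 * ((k:ℝ) + 1)))]
      exact div_self (mul_pos (Real.Gamma_pos_of_pos (by linarith))
        (Real.Gamma_pos_of_pos (by positivity))).ne'
    have hterm2 : ∀ p : ℕ,
        Real.Gamma (2 / β * ((p:ℝ) + 1)) /
          Real.Gamma (2 / β * ((r:ℝ) - r + ((p:ℝ) + 1))) = 1 := by
      intro p
      have e : 2 / β * ((r:ℝ) - r + ((p:ℝ) + 1)) = 2 / β * ((p:ℝ) + 1) := by ring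
      rw [e]
      exact div_self (Real.Gamma_pos_of_pos (by positivity)).ne'
    have h1 : (∏ k ∈ Finset.range (n - 1),
        (Real.Gamma ((r : ℝ) + 1 + β / 2 * (k + 1)) * Real.Gamma (1 + β / 2 * (k + 1)) /
          (Real.Gamma ((r : ℝ) - r + 1 + β / 2 * (k + 1)) *
            Real.Gamma ((r : ℝ) + 1 + β / 2 * (k + 1))))) = 1 := by
      rw [Finset.prod_congr rfl (fun k _ => hterm k)]
      exact Finset.prod_const_one
    have h2 : (∏ p ∈ Finset.range r,
        Real.Gamma (2 / β * (p + 1)) / Real.Gamma (2 / β * ((r : ℝ) - r + (p + 1)))) = 1 := by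
      rw [Finset.prod_congr rfl (fun p _ => hterm2 p)]
      exact Finset.prod_const_one
    rw [h1, h2]
    simp
  · -- main case r < R
    have hRr : (0:ℝ) < (R:ℝ) - r := by
      have : (r:ℝ) < R := by exact_mod_cast hlt
      linarith
    set d : ℝ := 2 * ((R:ℝ) - r) / β with hddef
    have hd0 : 0 < d := div_pos (by linarith) hβ
    have hball : ∀ p : ℕ, ∃ C, 0 ≤ C ∧ ∀ n : ℕ, 1 ≤ n →
        |(n:ℝ) ^ (-d) * (Real.Gamma ((n:ℝ) + 2 * ((p:ℝ)+1) / β + d) /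
          Real.Gamma ((n:ℝ) + 2 * ((p:ℝ)+1) / β)) - 1| ≤ C / n :=
      fun p => h_factor_bound (2 * ((p:ℝ)+1) / β) d (by positivity) hd0
    choose Cf hCf0 hCfb using hball
    set c : ℝ := ∑ p ∈ Finset.range r, Cf p with hcdef
    have hc0 : 0 ≤ c := Finset.sum_nonneg (fun p _ => hCf0 p)
    set L : ℝ := ∏ p ∈ Finset.range r,
        Real.Gamma (2 / β * (p + 1)) / Real.Gamma (2 / β * ((R : ℝ) - r + (p + 1))) with hLdef
    refine ⟨|L| * ((1 + c) ^ r * r * c), fun n hn => ?_⟩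
    have hn0 : (0:ℝ) < n := by exact_mod_cast hn
    have hn1 : (1:ℝ) ≤ n := by exact_mod_cast hn
    have hid := main_identity β hβ R r hr n hn
    rw [← hddef, ← hLdef] at hid
    rw [hid]
    set g : ℕ → ℝ := fun p => (n:ℝ) ^ (-d) *
        (Real.Gamma ((n:ℝ) + 2 * ((p:ℝ)+1) / β + d) /
          Real.Gamma ((n:ℝ) + 2 * ((p:ℝ)+1) / β)) with hgdef
    have hb : ∀ p < r, |g p - 1| ≤ c / n := by
      intro p hp
      refine (hCfb p n hn).trans ?_
      have : Cf p ≤ c :=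
        Finset.single_le_sum (fun q _ => hCf0 q) (Finset.mem_range.mpr hp)
      gcongr
    have hprod := prod_err g c (c / (n:ℝ)) (by positivity) (div_le_self hc0 hn1) r hb
    have e1 : L * ∏ p ∈ Finset.range r, g p - L = L * ((∏ p ∈ Finset.range r, g p) - 1) := by
      ring
    rw [e1, abs_mul]
    have := mul_le_mul_of_nonneg_left hprod (abs_nonneg L)
    refine this.trans ?_
    rw [show |L| * ((1 + c) ^ r * r * (c / (n:ℝ))) = |L| * ((1 + c) ^ r * r * c) / n from by
      ring]
end

section
/- Let A be a square matrix with strictly positive entries all of whose row sums equal the same value s. Then s is an eigenvalue of A with the all-ones eigenvector, s is a simple eigenvalue, and every other eigenvalue λ of A satisfies |λ| < s. -/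
open Matrix Polynomial

lemma pf_ones {N : ℕ} (A : Matrix (Fin N) (Fin N) ℝ) (s : ℝ)
    (hrow : ∀ i, ∑ j, A i j = s) : A.mulVec (fun _ => 1) = (fun _ => s) := by
  funext i
  simp [Matrix.mulVec, dotProduct, hrow i]

lemma pf_const {N : ℕ} (hN : 0 < N) (A : Matrix (Fin N) (Fin N) ℝ)
    (hpos : ∀ i j, 0 < A i j) (s : ℝ) (hrow : ∀ i, ∑ j, A i j = s)
    (v : Fin N → ℝ) (hv : A.mulVec v = s • v) : ∃ c : ℝ, v = fun _ => c := by
  have hne : (Finset.univ : Finset (Fin N)).Nonempty := ⟨⟨0, hN⟩, Finset.mem_univ _⟩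
  obtain ⟨i, -, hi⟩ := Finset.exists_max_image Finset.univ v hne
  refine ⟨v i, funext fun j => ?_⟩
  have h1 : ∑ j, A i j * v j = s * v i := by
    have := congrFun hv i
    simpa [Matrix.mulVec, dotProduct] using this
  have h2 : ∑ j, A i j * (v i - v j) = 0 := by
    have : ∑ j, A i j * (v i - v j) = (∑ j, A i j) * v i - ∑ j, A i j * v j := by
      rw [Finset.sum_mul]
      rw [← Finset.sum_sub_distrib]
      congr 1; funext j; ring
    rw [this, hrow i, h1, sub_self]
  have h3 := (Finset.sum_eq_zero_iff_of_nonneg (fun j _ =>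
    mul_nonneg (hpos i j).le (by linarith [hi j (Finset.mem_univ j)]))).1 h2 j (Finset.mem_univ j)
  have := mul_eq_zero.1 h3
  rcases this with h | h
  · exact absurd h (hpos i j).ne'
  · linarith

open Matrix Polynomial

lemma pf_spos {N : ℕ} (hN : 0 < N) (A : Matrix (Fin N) (Fin N) ℝ)
    (hpos : ∀ i j, 0 < A i j) (s : ℝ) (hrow : ∀ i, ∑ j, A i j = s) : 0 < s := by
  have i : Fin N := ⟨0, hN⟩
  rw [← hrow i]
  exact Finset.sum_pos (fun j _ => hpos i j) ⟨i, Finset.mem_univ _⟩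

lemma pf_left {N : ℕ} (hN : 0 < N) (A : Matrix (Fin N) (Fin N) ℝ)
    (hpos : ∀ i j, 0 < A i j) (s : ℝ) (hrow : ∀ i, ∑ j, A i j = s) :
    ∃ y : Fin N → ℝ, (∀ i, 0 < y i) ∧ Aᵀ.mulVec y = s • y := by
  have hs := pf_spos hN A hpos s hrow
  -- det (diagonal s - A) = 0
  have hdet : (Matrix.diagonal (fun _ : Fin N => s) - A).det = 0 := by
    rw [← Matrix.exists_mulVec_eq_zero_iff]
    refine ⟨(fun _ => 1), ?_, ?_⟩
    · intro h; have := congrFun h ⟨0, hN⟩; simpa using this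
    · funext i
      simp [Matrix.sub_mulVec, Matrix.mulVec, dotProduct, hrow i, Matrix.diagonal,
        Finset.sum_ite_eq]
  have hdetT : (Matrix.diagonal (fun _ : Fin N => s) - Aᵀ).det = 0 := by
    have : (Matrix.diagonal (fun _ : Fin N => s) - Aᵀ) =
        (Matrix.diagonal (fun _ : Fin N => s) - A)ᵀ := by
      rw [Matrix.transpose_sub, Matrix.diagonal_transpose]
    rw [this, Matrix.det_transpose, hdet]
  obtain ⟨y₀, hy₀ne, hy₀⟩ := (Matrix.exists_mulVec_eq_zero_iff).2 hdetT
  have hy₀' : Aᵀ.mulVec y₀ = s • y₀ := by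
    funext i
    have := congrFun hy₀ i
    simp [Matrix.sub_mulVec, Matrix.mulVec_diagonal] at this
    simpa [Pi.smul_apply, smul_eq_mul] using by linarith [this]
  set y : Fin N → ℝ := fun i => |y₀ i| with hy
  -- pointwise inequality
  have hineq : ∀ i, s * y i ≤ ∑ j, A j i * y j := by
    intro i
    have h1 : s * y₀ i = ∑ j, A j i * y₀ j := by
      have := congrFun hy₀' i
      simp [Matrix.mulVec, dotProduct, Matrix.transpose_apply] at this
      linarith [this]
    calc s * y i = |s * y₀ i| := by rw [abs_mul, abs_of_pos hs]
    _ = |∑ j, A j i * y₀ j| := by rw [h1]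
    _ ≤ ∑ j, |A j i * y₀ j| := Finset.abs_sum_le_sum_abs _ _
    _ = ∑ j, A j i * y j := by
        refine Finset.sum_congr rfl fun j _ => ?_
        rw [abs_mul, abs_of_pos (hpos j i)]
  -- sums are equal
  have hsum : ∑ i, (∑ j, A j i * y j - s * y i) = 0 := by
    rw [Finset.sum_sub_distrib, Finset.sum_comm]
    have : ∑ j, ∑ i, A j i * y j = ∑ j, s * y j := by
      refine Finset.sum_congr rfl fun j _ => ?_
      rw [← Finset.sum_mul, hrow j]
    rw [this, sub_self]
  have heq : ∀ i, ∑ j, A j i * y j = s * y i := by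
    intro i
    have := (Finset.sum_eq_zero_iff_of_nonneg (fun i _ => by linarith [hineq i])).1 hsum i
      (Finset.mem_univ i)
    linarith
  -- positivity
  obtain ⟨k, hk⟩ : ∃ k, y₀ k ≠ 0 := by
    by_contra h
    push_neg at h
    exact hy₀ne (funext fun i => h i)
  have hypos : ∀ i, 0 < y i := by
    intro i
    have h1 : 0 < ∑ j, A j i * y j :=
      Finset.sum_pos' (fun j _ => mul_nonneg (hpos j i).le (abs_nonneg _))
        ⟨k, Finset.mem_univ k, mul_pos (hpos k i) (abs_pos.2 hk)⟩
    have := heq i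
    nlinarith
  refine ⟨y, hypos, funext fun i => ?_⟩
  simp only [Matrix.mulVec, dotProduct, Matrix.transpose_apply, Pi.smul_apply,
    smul_eq_mul]
  rw [← heq i]

lemma pf_complex {N : ℕ} (hN : 0 < N) (A : Matrix (Fin N) (Fin N) ℝ)
    (hpos : ∀ i j, 0 < A i j) (s : ℝ) (hrow : ∀ i, ∑ j, A i j = s)
    (μ : ℂ) (v : Fin N → ℂ) (hv : v ≠ 0)
    (hmul : (A.map Complex.ofReal).mulVec v = μ • v) : μ = s ∨ ‖μ‖ < s := by
  have hs : 0 < s := by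
    rw [← hrow ⟨0, hN⟩]; exact Finset.sum_pos (fun j _ => hpos _ j) ⟨⟨0, hN⟩, Finset.mem_univ _⟩
  have hne : (Finset.univ : Finset (Fin N)).Nonempty := ⟨⟨0, hN⟩, Finset.mem_univ _⟩
  obtain ⟨i, -, hi⟩ := Finset.exists_max_image Finset.univ (fun j => ‖v j‖) hne
  simp only [Finset.mem_univ, forall_true_left] at hi
  have hvi : v i ≠ 0 := by
    intro h
    apply hv
    funext j
    have := hi j
    rw [h, norm_zero] at this
    exact norm_eq_zero.1 (le_antisymm this (norm_nonneg _))
  have hm : 0 < ‖v i‖ := norm_pos_iff.2 hvi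
  have heqi : ∑ j, (A i j : ℂ) * v j = μ * v i := by
    have := congrFun hmul i
    simpa [Matrix.mulVec, dotProduct, Matrix.map_apply] using this
  have hle : ‖μ‖ ≤ s := by
    have h1 : ‖μ‖ * ‖v i‖ ≤ s * ‖v i‖ := by
      calc ‖μ‖ * ‖v i‖ = ‖μ * v i‖ := (norm_mul _ _).symm
      _ = ‖∑ j, (A i j : ℂ) * v j‖ := by rw [heqi]
      _ ≤ ∑ j, ‖(A i j : ℂ) * v j‖ := norm_sum_le _ _
      _ = ∑ j, A i j * ‖v j‖ := by
          refine Finset.sum_congr rfl fun j _ => ?_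
          rw [norm_mul, Complex.norm_real, Real.norm_of_nonneg (hpos i j).le]
      _ ≤ ∑ j, A i j * ‖v i‖ :=
          Finset.sum_le_sum fun j _ => mul_le_mul_of_nonneg_left (hi j) (hpos i j).le
      _ = s * ‖v i‖ := by rw [← Finset.sum_mul, hrow i]
    exact le_of_mul_le_mul_right h1 hm
  rcases lt_or_eq_of_le hle with h | h
  · exact Or.inr h
  left
  set θ : ℂ := (starRingEnd ℂ) μ / s with hθ
  have hθnorm : ‖θ‖ = 1 := by
    rw [hθ, norm_div, RCLike.norm_conj, Complex.norm_real, Real.norm_of_nonneg hs.le, ← h,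
      div_self (by rw [← h] at hs; exact (norm_pos_iff.2 (by intro h0; rw [h0, norm_zero] at hs; linarith)).ne')]
  have hθμ : θ * μ = s := by
    rw [hθ, div_mul_eq_mul_div, ← Complex.normSq_eq_conj_mul_self]
    have : Complex.normSq μ = s ^ 2 := by
      rw [Complex.normSq_eq_norm_sq, h]
    rw [this, Complex.ofReal_pow, sq, mul_div_assoc,
      div_self (show (s:ℂ) ≠ 0 by exact_mod_cast hs.ne'), mul_one]
  set w : Fin N → ℂ := fun j => θ * v j / v i with hw
  have hwnorm : ∀ j, ‖w j‖ ≤ 1 := by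
    intro j
    rw [hw]
    simp only [norm_div, norm_mul, hθnorm, one_mul]
    exact div_le_one_of_le₀ (hi j) (norm_nonneg _)
  have hsum : ∑ j, (A i j : ℂ) * w j = s := by
    have : ∑ j, (A i j : ℂ) * w j = θ * (∑ j, (A i j : ℂ) * v j) / v i := by
      rw [Finset.mul_sum, Finset.sum_div]
      refine Finset.sum_congr rfl fun j _ => ?_
      rw [hw]; ring
    rw [this, heqi]
    field_simp
    exact hθμ
  have hre : ∑ j, A i j * (1 - (w j).re) = 0 := by
    have h1 : ∑ j, A i j * (w j).re = s := by
      have := congrArg Complex.re hsum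
      simpa [Complex.re_sum, Complex.mul_re, Complex.ofReal_re, Complex.ofReal_im] using this
    have h2 : ∑ j, A i j * (1 - (w j).re) = (∑ j, A i j) - ∑ j, A i j * (w j).re := by
      rw [← Finset.sum_sub_distrib]
      refine Finset.sum_congr rfl fun j _ => by ring
    rw [h2, hrow i, h1, sub_self]
  have hre1 : ∀ j, (w j).re = 1 := by
    intro j
    have hnn : ∀ k ∈ Finset.univ, 0 ≤ A i k * (1 - (w k).re) := by
      intro k _
      refine mul_nonneg (hpos i k).le ?_
      have habs : ‖w k‖ ≤ 1 := by exact hwnorm k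
      linarith [Complex.re_le_norm (w k)]
    have := (Finset.sum_eq_zero_iff_of_nonneg hnn).1 hre j (Finset.mem_univ j)
    rcases mul_eq_zero.1 this with h' | h'
    · exact absurd h' (hpos i j).ne'
    · linarith
  have hwi : w i = θ := by rw [hw]; field_simp
  have hθ1 : θ = 1 := by
    have hreθ : θ.re = 1 := by rw [← hwi]; exact hre1 i
    have him : θ.im = 0 := by
      have h2 : Complex.normSq θ = 1 := by
        rw [← Complex.sq_norm, hθnorm, one_pow]
      rw [Complex.normSq_apply, hreθ] at h2
      nlinarith
    exact Complex.ext hreθ him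
  have : (starRingEnd ℂ) μ = s := by
    have := hθ1
    rw [hθ, div_eq_one_iff_eq (by exact_mod_cast hs.ne')] at this
    exact this
  calc μ = (starRingEnd ℂ) ((starRingEnd ℂ) μ) := (Complex.conj_conj μ).symm
  _ = (starRingEnd ℂ) (s : ℂ) := by rw [this]
  _ = s := Complex.conj_ofReal s

lemma pf_charpoly_conj {m : Type*} [Fintype m] [DecidableEq m] (P Q M : Matrix m m ℝ)
    (h1 : Q * P = 1) (h2 : P * Q = 1) : (Q * M * P).charpoly = M.charpoly := by
  unfold Matrix.charpoly
  have hQP : (Q.map (C : ℝ →+* ℝ[X])) * (P.map C) = 1 := by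
    rw [← Matrix.map_mul, h1, Matrix.map_one _ (map_zero _) (map_one _)]
  have hPQ : (P.map (C : ℝ →+* ℝ[X])) * (Q.map C) = 1 := by
    rw [← Matrix.map_mul, h2, Matrix.map_one _ (map_zero _) (map_one _)]
  have key : charmatrix (Q * M * P) = (Q.map (C : ℝ →+* ℝ[X])) * charmatrix M * (P.map C) := by
    unfold charmatrix
    rw [Matrix.mul_sub, Matrix.sub_mul]
    congr 1
    · rw [Matrix.scalar_apply, ← Matrix.smul_one_eq_diagonal]
      rw [Matrix.mul_smul, Matrix.mul_one, Matrix.smul_mul, hQP]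
    · simp only [RingHom.mapMatrix_apply]
      rw [Matrix.map_mul, Matrix.map_mul]
  rw [key, Matrix.det_mul, Matrix.det_mul]
  have : (Q.map (C : ℝ →+* ℝ[X])).det * (P.map C).det = 1 := by
    rw [mul_comm, ← Matrix.det_mul, hPQ, Matrix.det_one]
  calc (Q.map (C : ℝ →+* ℝ[X])).det * (charmatrix M).det * (P.map C).det
      = ((Q.map (C : ℝ →+* ℝ[X])).det * (P.map C).det) * (charmatrix M).det := by ring
  _ = (charmatrix M).det := by rw [this, one_mul]

lemma pf_charmatrix_submatrix {n : ℕ} (M : Matrix (Fin (n+1)) (Fin (n+1)) ℝ) :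
    (charmatrix M).submatrix Fin.succ Fin.succ = charmatrix (M.submatrix Fin.succ Fin.succ) := by
  ext i j
  simp only [Matrix.submatrix_apply, charmatrix_apply, Matrix.diagonal_apply]
  by_cases h : i = j
  · simp [h]
  · simp [h, fun hc => h (Fin.succ_injective _ hc)]

-- block factorization
lemma pf_charpoly_block {n : ℕ} (M : Matrix (Fin (n+1)) (Fin (n+1)) ℝ) (s : ℝ)
    (h00 : M 0 0 = s) (h0 : ∀ i, i ≠ 0 → M i 0 = 0) :
    M.charpoly = (X - C s) * (M.submatrix Fin.succ Fin.succ).charpoly := by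
  unfold Matrix.charpoly
  rw [Matrix.det_succ_column_zero]
  rw [Finset.sum_eq_single 0]
  · rw [Fin.succAbove_zero, pf_charmatrix_submatrix]
    simp [charmatrix_apply, h00]
  · intro i _ hi
    have : charmatrix M i 0 = 0 := by
      rw [charmatrix_apply_ne _ _ _ hi, h0 i hi, map_zero, neg_zero]
    rw [this]
    ring
  · intro h; exact absurd (Finset.mem_univ _) h

lemma pf_eval_charpoly {m : Type*} [Fintype m] [DecidableEq m] (M : Matrix m m ℝ) (t : ℝ) :
    M.charpoly.eval t = (Matrix.diagonal (fun _ => t) - M).det := by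
  have h1 : M.charpoly.eval t = (Polynomial.evalRingHom t) (charmatrix M).det := rfl
  rw [h1, RingHom.map_det]
  congr 1
  ext i j
  by_cases h : i = j
  · simp [charmatrix_apply, Matrix.diagonal_apply, h]
  · simp [charmatrix_apply, Matrix.diagonal_apply, h]

lemma pf_mult {n : ℕ} (A : Matrix (Fin (n+1)) (Fin (n+1)) ℝ)
    (hpos : ∀ i j, 0 < A i j) (s : ℝ) (hrow : ∀ i, ∑ j, A i j = s)
    (hleft : ∃ y : Fin (n+1) → ℝ, (∀ i, 0 < y i) ∧ Aᵀ.mulVec y = s • y)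
    (hconst : ∀ v : Fin (n+1) → ℝ, A.mulVec v = s • v → ∃ c : ℝ, v = fun _ => c) :
    Polynomial.rootMultiplicity s A.charpoly = 1 := by
  set P : Matrix (Fin (n+1)) (Fin (n+1)) ℝ :=
    fun i j => if j = 0 then 1 else if i = j then 1 else 0 with hP
  have hPlow : P.BlockTriangular OrderDual.toDual := by
    intro i j hij
    have h1 : i < j := hij
    have h2 : j ≠ 0 := by
      intro h; rw [h] at h1; exact absurd h1 (Fin.not_lt_zero i)
    simp [hP, h2, (ne_of_lt h1)]
  have hPdet : P.det = 1 := by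
    rw [Matrix.det_of_lowerTriangular P hPlow]
    refine Finset.prod_eq_one fun i _ => ?_
    by_cases h : i = 0 <;> simp [hP, h]
  have hPunit : IsUnit P.det := by rw [hPdet]; exact isUnit_one
  set Q : Matrix (Fin (n+1)) (Fin (n+1)) ℝ := P⁻¹ with hQ
  have h1 : Q * P = 1 := Matrix.nonsing_inv_mul P hPunit
  have h2 : P * Q = 1 := Matrix.mul_nonsing_inv P hPunit
  set Cm : Matrix (Fin (n+1)) (Fin (n+1)) ℝ := Q * A * P with hCm
  have hchar : Cm.charpoly = A.charpoly := pf_charpoly_conj P Q A h1 h2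
  have hP0 : ∀ i, P i 0 = 1 := fun i => by simp [hP]
  have hAP : ∀ i, (A * P) i 0 = s * P i 0 := by
    intro i
    rw [Matrix.mul_apply, hP0 i]
    simp only [hP0, mul_one]
    rw [hrow i]
  have hcol : ∀ i, Cm i 0 = s * (1 : Matrix (Fin (n+1)) (Fin (n+1)) ℝ) i 0 := by
    intro i
    have : Cm i 0 = (Q * (A * P)) i 0 := by rw [hCm, Matrix.mul_assoc]
    rw [this, Matrix.mul_apply]
    have : ∀ k, Q i k * (A * P) k 0 = s * (Q i k * P k 0) := by
      intro k; rw [hAP k]; ring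
    rw [Finset.sum_congr rfl (fun k _ => this k), ← Finset.mul_sum, ← Matrix.mul_apply, h1]
  have h00 : Cm 0 0 = s := by rw [hcol 0, Matrix.one_apply_eq, mul_one]
  have h0 : ∀ i, i ≠ 0 → Cm i 0 = 0 := by
    intro i hi
    rw [hcol i, Matrix.one_apply_ne hi, mul_zero]
  set B : Matrix (Fin n) (Fin n) ℝ := Cm.submatrix Fin.succ Fin.succ with hB
  have factor : A.charpoly = (X - C s) * B.charpoly := by
    rw [← hchar, pf_charpoly_block Cm s h00 h0]
  -- B has no eigenvalue s
  have heval : B.charpoly.eval s ≠ 0 := by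
    intro heval
    rw [pf_eval_charpoly] at heval
    obtain ⟨w, hwne, hw⟩ := (Matrix.exists_mulVec_eq_zero_iff).2 heval
    have hBw : B.mulVec w = s • w := by
      funext k
      have := congrFun hw k
      simp only [Matrix.sub_mulVec, Pi.sub_apply, Matrix.mulVec_diagonal,
        Pi.zero_apply] at this
      simp only [Pi.smul_apply, smul_eq_mul]
      linarith
    set x : Fin (n+1) → ℝ := Fin.cons 0 w with hx
    set v : Fin (n+1) → ℝ := P.mulVec x with hv
    set c : ℝ := (Cm.mulVec x) 0 with hc
    have hCx : Cm.mulVec x = s • x + c • (Pi.single 0 1 : Fin (n+1) → ℝ) := by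
      funext i
      refine Fin.cases ?_ (fun k => ?_) i
      · simp [hx, hc, Pi.single_eq_same]
      · have hlhs : (Cm.mulVec x) (Fin.succ k) = s * w k := by
          have e1 : (Cm.mulVec x) (Fin.succ k) = ∑ j, Cm (Fin.succ k) j * x j := rfl
          rw [e1, Fin.sum_univ_succ, show x 0 = 0 from rfl, mul_zero, zero_add]
          have e2 : ∀ j, Cm (Fin.succ k) (Fin.succ j) * x (Fin.succ j) = B k j * w j := by
            intro j
            rw [hB, Matrix.submatrix_apply, hx, Fin.cons_succ]
          rw [Finset.sum_congr rfl (fun j _ => e2 j)]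
          have e3 : ∑ j, B k j * w j = (B.mulVec w) k := rfl
          rw [e3, hBw]
          rfl
        rw [hlhs]
        simp [hx, Fin.cons_succ, Pi.single_eq_of_ne (Fin.succ_ne_zero k)]
    have hAv : A.mulVec v = s • v + c • (fun _ => (1:ℝ)) := by
      have hAPPC : A * P = P * Cm := by
        rw [hCm, ← Matrix.mul_assoc, ← Matrix.mul_assoc, h2, Matrix.one_mul]
      have : A.mulVec v = P.mulVec (Cm.mulVec x) := by
        rw [hv, Matrix.mulVec_mulVec, hAPPC, ← Matrix.mulVec_mulVec]
      rw [this, hCx, Matrix.mulVec_add, Matrix.mulVec_smul, Matrix.mulVec_smul, ← hv]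
      congr 1
      congr 1
      rw [Matrix.mulVec_single]
      funext i
      simp [hP0 i]
    -- left eigenvector kills c
    obtain ⟨y, hy, hyA⟩ := hleft
    have hdot : y ⬝ᵥ (A.mulVec v) = s * (y ⬝ᵥ v) := by
      rw [Matrix.dotProduct_mulVec, ← Matrix.mulVec_transpose, hyA, smul_dotProduct,
        smul_eq_mul]
    have hdot2 : y ⬝ᵥ (A.mulVec v) = s * (y ⬝ᵥ v) + c * ∑ i, y i := by
      rw [hAv, dotProduct_add, dotProduct_smul, dotProduct_smul]
      simp only [smul_eq_mul]
      congr 1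
      simp [dotProduct]
    have hsumy : 0 < ∑ i, y i :=
      Finset.sum_pos (fun i _ => hy i) ⟨0, Finset.mem_univ _⟩
    have hc0 : c = 0 := by
      have : c * ∑ i, y i = 0 := by linarith [hdot, hdot2]
      rcases mul_eq_zero.1 this with h | h
      · exact h
      · exact absurd h hsumy.ne'
    have hAv' : A.mulVec v = s • v := by
      rw [hAv, hc0, zero_smul, add_zero]
    obtain ⟨d, hd⟩ := hconst v hAv'
    -- compute v 0 and v (succ k)
    have hv0 : v 0 = x 0 := by
      have e1 : v 0 = ∑ j, P 0 j * x j := rfl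
      rw [e1, Fin.sum_univ_succ, hP0 0, one_mul]
      have e2 : ∀ j : Fin n, P 0 (Fin.succ j) * x (Fin.succ j) = 0 := by
        intro j
        have : P 0 (Fin.succ j) = 0 := by
          simp [hP, Ne.symm (Fin.succ_ne_zero j), (Fin.succ_ne_zero j)]
        rw [this, zero_mul]
      rw [Finset.sum_congr rfl (fun j _ => e2 j), Finset.sum_const_zero, add_zero]
    have hd0 : d = 0 := by
      have : v 0 = d := by rw [hd]
      rw [hv0] at this
      simpa [hx] using this.symm
    apply hwne
    funext k
    have hvs : v (Fin.succ k) = x 0 + x (Fin.succ k) := by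
      have e1 : v (Fin.succ k) = ∑ j, P (Fin.succ k) j * x j := rfl
      rw [e1, Fin.sum_univ_succ, hP0 (Fin.succ k), one_mul]
      congr 1
      have e2 : ∀ j : Fin n, P (Fin.succ k) (Fin.succ j) * x (Fin.succ j)
          = if j = k then x (Fin.succ j) else 0 := by
        intro j
        by_cases h : j = k
        · simp [hP, h, Ne.symm (Fin.succ_ne_zero k)]
        · have hne : Fin.succ k ≠ Fin.succ j := fun hc => h (Fin.succ_injective _ hc).symm
          simp [hP, Fin.succ_ne_zero j, hne, h]
      rw [Finset.sum_congr rfl (fun j _ => e2 j)]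
      rw [Finset.sum_ite_eq' Finset.univ k (fun j => x (Fin.succ j))]
      simp
    have : v (Fin.succ k) = d := by rw [hd]
    rw [hvs] at this
    have hx0 : x 0 = 0 := rfl
    have hxs : x (Fin.succ k) = w k := by rw [hx, Fin.cons_succ]
    rw [hx0, hxs, zero_add, hd0] at this
    simpa using this
  -- conclude
  have hne : A.charpoly ≠ 0 := A.charpoly_monic.ne_zero
  rw [factor] at hne ⊢
  rw [Polynomial.rootMultiplicity_mul hne]
  rw [Polynomial.rootMultiplicity_X_sub_C_self]
  rw [Polynomial.rootMultiplicity_eq_zero (by simpa [Polynomial.IsRoot] using heval)]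

theorem stmt11 (N : ℕ) (hN : 0 < N) (A : Matrix (Fin N) (Fin N) ℝ)
    (hpos : ∀ i j, 0 < A i j) (s : ℝ) (hrow : ∀ i, ∑ j, A i j = s) :
    A.mulVec (fun _ => 1) = (fun _ => s) ∧
    Polynomial.rootMultiplicity s A.charpoly = 1 ∧
    (∀ (μ : ℂ) (v : Fin N → ℂ), v ≠ 0 →
      (A.map Complex.ofReal).mulVec v = μ • v → μ = s ∨ ‖μ‖ < s) ∧
    (∀ v : Fin N → ℝ, A.mulVec v = s • v → ∃ c : ℝ, v = fun _ => c) := by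
  refine ⟨pf_ones A s hrow, ?_, fun μ v hv hm => pf_complex hN A hpos s hrow μ v hv hm,
    fun v hv => pf_const hN A hpos s hrow v hv⟩
  obtain ⟨n, rfl⟩ : ∃ n, N = n + 1 := ⟨N - 1, (Nat.succ_pred_eq_of_pos hN).symm⟩
  exact pf_mult A hpos s hrow (pf_left hN A hpos s hrow) (pf_const hN A hpos s hrow)
end

section
/- Uniqueness for the singular ODE: let Δ, V₀, β, r, R, χ be as above. If Ψ₁, Ψ₂ : (0,∞) → ℂ^N are C¹ solutions of Ψ'(t) = ((2/(βt))Δ + V₀)Ψ(t) both satisfying t^{-2r(R-r)/β}Ψ_j(t) = χ + O(t) as t ↓ 0, then Ψ₁ = Ψ₂. -/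
open Asymptotics ComplexOrder

set_option maxHeartbeats 1000000

private lemma hasDerivAt_normSq_comp {z : ℝ → ℂ} {z' : ℂ} {t : ℝ}
    (hz : HasDerivAt z z' t) :
    HasDerivAt (fun s => Complex.normSq (z s))
      (2 * ((starRingEnd ℂ) (z t) * z').re) t := by
  have hre : HasDerivAt (fun s => (z s).re) z'.re t :=
    Complex.reCLM.hasFDerivAt.comp_hasDerivAt t hz
  have him : HasDerivAt (fun s => (z s).im) z'.im t :=
    Complex.imCLM.hasFDerivAt.comp_hasDerivAt t hz
  have := (hre.mul hre).add (him.mul him)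
  simp only [Complex.normSq_apply]
  refine this.congr_deriv ?_
  simp [Complex.mul_re]
  ring

private lemma re_dot_le {N : ℕ} (A : Matrix (Fin N) (Fin N) ℂ) (x : Fin N → ℂ) :
    (dotProduct (star x) (A.mulVec x)).re ≤
      (∑ i, ∑ j, ‖A i j‖) * ∑ i, Complex.normSq (x i) := by
  set g : ℝ := ∑ i, Complex.normSq (x i) with hg
  have hsingle : ∀ k, Complex.normSq (x k) ≤ g :=
    fun k => Finset.single_le_sum (fun _ _ => Complex.normSq_nonneg _) (Finset.mem_univ k)
  have hxx : ∀ i j, ‖x i‖ * ‖x j‖ ≤ g := by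
    intro i j
    have h1 := hsingle i
    have h2 := hsingle j
    rw [← Complex.sq_norm] at h1 h2
    nlinarith [norm_nonneg (x i), norm_nonneg (x j),
      sq_nonneg (‖x i‖ - ‖x j‖)]
  calc (dotProduct (star x) (A.mulVec x)).re
      ≤ ‖dotProduct (star x) (A.mulVec x)‖ := Complex.re_le_norm _
    _ ≤ ∑ i, ‖(starRingEnd ℂ) (x i) * A.mulVec x i‖ := by
        rw [dotProduct]
        exact (norm_sum_le _ _).trans_eq (by simp [Pi.star_apply])
    _ ≤ ∑ i, ∑ j, ‖A i j‖ * g := by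
        apply Finset.sum_le_sum
        intro i _
        rw [norm_mul, Complex.norm_conj]
        calc ‖x i‖ * ‖A.mulVec x i‖
            ≤ ‖x i‖ * ∑ j, ‖A i j * x j‖ := by
              apply mul_le_mul_of_nonneg_left _ (norm_nonneg _)
              rw [Matrix.mulVec, dotProduct]
              exact norm_sum_le _ _
          _ = ∑ j, ‖A i j‖ * (‖x i‖ * ‖x j‖) := by
              rw [Finset.mul_sum]; congr 1; funext j; rw [norm_mul]; ring
          _ ≤ ∑ j, ‖A i j‖ * g := by
              apply Finset.sum_le_sum
              intro j _
              exact mul_le_mul_of_nonneg_left (hxx i j) (norm_nonneg _)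
    _ = (∑ i, ∑ j, ‖A i j‖) * g := by
        rw [Finset.sum_mul]; congr 1; funext i; rw [Finset.sum_mul]

theorem stmt15 (N R r : ℕ) (β : ℝ) (hβ : 0 < β)
    (Δ V₀ : Matrix (Fin N) (Fin N) ℂ) (hherm : Δ.IsHermitian)
    (hpsd : ((((r : ℝ) * ((R : ℝ) - r) : ℝ) : ℂ) • (1 : Matrix (Fin N) (Fin N) ℂ) -
        Δ).PosSemidef)
    (χ : Fin N → ℂ)
    (hχ : Δ.mulVec χ = (((r : ℝ) * ((R : ℝ) - r) : ℝ) : ℂ) • χ)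
    (Ψ₁ Ψ₂ : ℝ → Fin N → ℂ)
    (hode1 : ∀ t : ℝ, 0 < t →
      HasDerivAt Ψ₁ ((2 / (β * t)) • Δ.mulVec (Ψ₁ t) + V₀.mulVec (Ψ₁ t)) t)
    (hode2 : ∀ t : ℝ, 0 < t →
      HasDerivAt Ψ₂ ((2 / (β * t)) • Δ.mulVec (Ψ₂ t) + V₀.mulVec (Ψ₂ t)) t)
    (hasy1 : (fun t : ℝ => t ^ (-(2 * (r : ℝ) * ((R : ℝ) - r) / β)) • Ψ₁ t - χ)
        =O[nhdsWithin 0 (Set.Ioi 0)] (fun t => t))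
    (hasy2 : (fun t : ℝ => t ^ (-(2 * (r : ℝ) * ((R : ℝ) - r) / β)) • Ψ₂ t - χ)
        =O[nhdsWithin 0 (Set.Ioi 0)] (fun t => t)) :
    ∀ t : ℝ, 0 < t → Ψ₁ t = Ψ₂ t := by
  set lam : ℝ := (r : ℝ) * ((R : ℝ) - r) with hlam
  set α : ℝ := 2 * (r : ℝ) * ((R : ℝ) - r) / β with hα
  set C : ℝ := ∑ i, ∑ j, ‖V₀ i j‖ with hCdef
  have hC0 : 0 ≤ C :=
    Finset.sum_nonneg fun _ _ => Finset.sum_nonneg fun _ _ => norm_nonneg _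
  set Φ : ℝ → Fin N → ℂ := fun t => Ψ₁ t - Ψ₂ t with hΦdef
  -- ODE for Φ
  have hΦode : ∀ t : ℝ, 0 < t →
      HasDerivAt Φ ((2 / (β * t)) • Δ.mulVec (Φ t) + V₀.mulVec (Φ t)) t := by
    intro t ht
    have h := (hode1 t ht).sub (hode2 t ht)
    refine h.congr_deriv ?_
    simp only [hΦdef, Matrix.mulVec_sub, smul_sub]
    abel
  set g : ℝ → ℝ := fun t => ∑ i, Complex.normSq (Φ t i) with hgdef
  have hg0 : ∀ t, 0 ≤ g t := fun t =>
    Finset.sum_nonneg fun _ _ => Complex.normSq_nonneg _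
  -- derivative bound for g
  have hgd : ∀ t : ℝ, 0 < t → ∃ d : ℝ, HasDerivAt g d t ∧
      d ≤ (2 * α / t) * g t + 2 * C * g t := by
    intro t ht
    set w : Fin N → ℂ := (2 / (β * t)) • Δ.mulVec (Φ t) + V₀.mulVec (Φ t) with hw
    have hcomp : ∀ i, HasDerivAt (fun s => Φ s i) (w i) t :=
      hasDerivAt_pi.mp (hΦode t ht)
    have hder : HasDerivAt g (∑ i, 2 * ((starRingEnd ℂ) (Φ t i) * w i).re) t := by
      apply HasDerivAt.fun_sum
      intro i _
      exact hasDerivAt_normSq_comp (hcomp i)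
    refine ⟨_, hder, ?_⟩
    have hsum_eq : (∑ i, 2 * ((starRingEnd ℂ) (Φ t i) * w i).re) =
        2 * (dotProduct (star (Φ t)) w).re := by
      rw [dotProduct, Complex.re_sum, Finset.mul_sum]
      simp [Pi.star_apply]
    rw [hsum_eq]
    have hdot : dotProduct (star (Φ t)) w =
        (2 / (β * t)) • dotProduct (star (Φ t)) (Δ.mulVec (Φ t)) +
          dotProduct (star (Φ t)) (V₀.mulVec (Φ t)) := by
      rw [hw, dotProduct_add, dotProduct_smul]
    have hre : (dotProduct (star (Φ t)) w).re =
        (2 / (β * t)) * (dotProduct (star (Φ t)) (Δ.mulVec (Φ t))).re +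
          (dotProduct (star (Φ t)) (V₀.mulVec (Φ t))).re := by
      rw [hdot, Complex.add_re, Complex.real_smul, Complex.re_ofReal_mul]
    -- PSD bound
    have hxx : (dotProduct (star (Φ t)) (Φ t)).re = g t := by
      rw [dotProduct, Complex.re_sum]
      congr 1; funext i
      simp [Pi.star_apply, Complex.mul_re, Complex.normSq_apply]
    have hΔbound : (dotProduct (star (Φ t)) (Δ.mulVec (Φ t))).re ≤ lam * g t := by
      have hpos := hpsd.dotProduct_mulVec_nonneg (Φ t)
      rw [Matrix.sub_mulVec, Matrix.smul_mulVec, Matrix.one_mulVec,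
        dotProduct_sub, dotProduct_smul] at hpos
      have h0 := (Complex.le_def.mp hpos).1
      rw [Complex.zero_re, Complex.sub_re, smul_eq_mul, Complex.re_ofReal_mul, hxx] at h0
      linarith
    have hVbound := re_dot_le V₀ (Φ t)
    rw [hre]
    have h2βt : 0 ≤ 2 / (β * t) := by positivity
    have hαt : 2 * α / t = 2 * (2 / (β * t)) * lam := by
      field_simp [hα, hlam]
      rw [hα, hlam]; field_simp
    calc 2 * ((2 / (β * t)) * (dotProduct (star (Φ t)) (Δ.mulVec (Φ t))).re +
          (dotProduct (star (Φ t)) (V₀.mulVec (Φ t))).re)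
        ≤ 2 * ((2 / (β * t)) * (lam * g t) + C * g t) := by
          apply mul_le_mul_of_nonneg_left _ (by norm_num)
          exact add_le_add (mul_le_mul_of_nonneg_left hΔbound h2βt) (hVbound.trans_eq rfl)
      _ = (2 * α / t) * g t + 2 * C * g t := by rw [hαt]; ring
  -- G and H
  set G : ℝ → ℝ := fun t => (t ^ (-α)) ^ 2 * g t with hGdef
  have hG0 : ∀ t, 0 ≤ G t := fun t => mul_nonneg (sq_nonneg _) (hg0 t)
  have hGd : ∀ t : ℝ, 0 < t → ∃ d : ℝ, HasDerivAt G d t ∧ d ≤ 2 * C * G t := by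
    intro t ht
    obtain ⟨d, hd, hdle⟩ := hgd t ht
    have hpow : HasDerivAt (fun s : ℝ => (s ^ (-α)) ^ 2)
        (2 * (t ^ (-α)) ^ 1 * (-α * t ^ (-α - 1))) t :=
      (Real.hasDerivAt_rpow_const (Or.inl ht.ne')).pow 2
    have hG : HasDerivAt G
        (2 * (t ^ (-α)) ^ 1 * (-α * t ^ (-α - 1)) * g t + (t ^ (-α)) ^ 2 * d) t :=
      hpow.mul hd
    refine ⟨_, hG, ?_⟩
    have hts : t ^ (-α - 1) = t ^ (-α) / t := by
      rw [Real.rpow_sub ht, Real.rpow_one]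
    have htα : 0 < t ^ (-α) := Real.rpow_pos_of_pos ht _
    have key : 2 * (t ^ (-α)) ^ 1 * (-α * t ^ (-α - 1)) * g t + (t ^ (-α)) ^ 2 * d
        ≤ (t ^ (-α)) ^ 2 * (-(2 * α / t) * g t + d) := by
      rw [hts]
      rw [pow_one]
      have : 2 * t ^ (-α) * (-α * (t ^ (-α) / t)) * g t =
          (t ^ (-α)) ^ 2 * (-(2 * α / t) * g t) := by
        rw [div_eq_mul_inv, div_eq_mul_inv]
        ring
      rw [this]
      linarith
    refine key.trans ?_
    have : -(2 * α / t) * g t + d ≤ 2 * C * g t := by linarith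
    calc (t ^ (-α)) ^ 2 * (-(2 * α / t) * g t + d)
        ≤ (t ^ (-α)) ^ 2 * (2 * C * g t) := by
          exact mul_le_mul_of_nonneg_left this (sq_nonneg _)
      _ = 2 * C * G t := by rw [hGdef]; ring
  set H : ℝ → ℝ := fun t => Real.exp (-(2 * C) * t) * G t with hHdef
  have hH0 : ∀ t, 0 ≤ H t := fun t => mul_nonneg (Real.exp_pos _).le (hG0 t)
  have hHd : ∀ t : ℝ, 0 < t → ∃ d : ℝ, HasDerivAt H d t ∧ d ≤ 0 := by
    intro t ht
    obtain ⟨d, hd, hdle⟩ := hGd t ht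
    have hexp : HasDerivAt (fun s : ℝ => Real.exp (-(2 * C) * s))
        (-(2 * C) * Real.exp (-(2 * C) * t)) t := by
      have h1 : HasDerivAt (fun s : ℝ => -(2 * C) * s) (-(2 * C)) t := by
        simpa using (hasDerivAt_id t).const_mul (-(2 * C))
      have := (Real.hasDerivAt_exp (-(2 * C) * t)).comp t h1
      refine this.congr_deriv ?_
      ring
    have hH : HasDerivAt H
        (-(2 * C) * Real.exp (-(2 * C) * t) * G t + Real.exp (-(2 * C) * t) * d) t :=
      hexp.mul hd
    refine ⟨_, hH, ?_⟩
    have he : 0 < Real.exp (-(2 * C) * t) := Real.exp_pos _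
    nlinarith [mul_le_mul_of_nonneg_left hdle he.le]
  -- H antitone on Ioi 0
  have hHdiff : ∀ x ∈ Set.Ioi (0 : ℝ), DifferentiableAt ℝ H x := by
    intro x hx
    obtain ⟨d, hd, _⟩ := hHd x hx
    exact hd.differentiableAt
  have hanti : AntitoneOn H (Set.Ioi 0) := by
    apply antitoneOn_of_deriv_nonpos (convex_Ioi 0)
    · exact fun x hx => (hHdiff x hx).continuousAt.continuousWithinAt
    · rw [interior_Ioi]
      exact fun x hx => (hHdiff x hx).differentiableWithinAt
    · rw [interior_Ioi]
      intro x hx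
      obtain ⟨d, hd, hdle⟩ := hHd x hx
      rw [hd.deriv]
      exact hdle
  -- limit of G at 0+
  have hO : (fun t : ℝ => t ^ (-α) • Φ t) =O[nhdsWithin 0 (Set.Ioi 0)]
      (fun t => t) := by
    have h := hasy1.sub hasy2
    refine h.congr' ?_ (Filter.Eventually.of_forall fun _ => rfl)
    filter_upwards with t
    simp [hΦdef, smul_sub]
  obtain ⟨c, hc⟩ := hO.bound
  have hGlim : Filter.Tendsto G (nhdsWithin 0 (Set.Ioi 0)) (nhds 0) := by
    apply squeeze_zero' (Filter.Eventually.of_forall hG0)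
    · filter_upwards [hc, self_mem_nhdsWithin] with t hct (htpos : t ∈ Set.Ioi 0)
      have ht : (0:ℝ) < t := htpos
      have htα : (0:ℝ) ≤ t ^ (-α) := (Real.rpow_pos_of_pos ht _).le
      have h1 : g t ≤ (N : ℝ) * ‖Φ t‖ ^ 2 := by
        rw [hgdef]
        calc (∑ i, Complex.normSq (Φ t i)) ≤ ∑ _i : Fin N, ‖Φ t‖ ^ 2 := by
              apply Finset.sum_le_sum
              intro i _
              rw [← Complex.sq_norm]
              have := norm_le_pi_norm (Φ t) i
              have h0 : (0:ℝ) ≤ ‖Φ t i‖ := norm_nonneg _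
              calc ‖Φ t i‖ ^ 2 = ‖Φ t i‖ ^ 2 := rfl
                _ ≤ ‖Φ t‖ ^ 2 := pow_le_pow_left₀ (norm_nonneg _) this 2
          _ = (N : ℝ) * ‖Φ t‖ ^ 2 := by simp [Finset.sum_const, mul_comm]
      have h2 : G t ≤ (N : ℝ) * (t ^ (-α) * ‖Φ t‖) ^ 2 := by
        rw [hGdef]
        calc (t ^ (-α)) ^ 2 * g t ≤ (t ^ (-α)) ^ 2 * ((N : ℝ) * ‖Φ t‖ ^ 2) :=
              mul_le_mul_of_nonneg_left h1 (sq_nonneg _)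
          _ = (N : ℝ) * (t ^ (-α) * ‖Φ t‖) ^ 2 := by ring
      have h3 : t ^ (-α) * ‖Φ t‖ = ‖t ^ (-α) • Φ t‖ := by
        rw [norm_smul, Real.norm_eq_abs, abs_of_nonneg htα]
      have h4 : ‖t ^ (-α) • Φ t‖ ≤ c * ‖t‖ := hct
      have h5 : (0:ℝ) ≤ c * ‖t‖ := le_trans (norm_nonneg _) h4
      calc G t ≤ (N : ℝ) * (t ^ (-α) * ‖Φ t‖) ^ 2 := h2
        _ ≤ (N : ℝ) * (c * ‖t‖) ^ 2 := by
            apply mul_le_mul_of_nonneg_left _ (Nat.cast_nonneg N)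
            rw [h3]
            exact pow_le_pow_left₀ (norm_nonneg _) h4 2
        _ = (N : ℝ) * c ^ 2 * t ^ 2 := by
            simp only [Real.norm_eq_abs, mul_pow, sq_abs]
            ring
    · have : Filter.Tendsto (fun t : ℝ => (N : ℝ) * c ^ 2 * t ^ 2) (nhds 0) (nhds 0) := by
        have hcont : Continuous (fun t : ℝ => (N : ℝ) * c ^ 2 * t ^ 2) :=
          continuous_const.mul (continuous_pow 2)
        have := hcont.tendsto 0
        simpa using this
      exact this.mono_left nhdsWithin_le_nhds
  have hHlim : Filter.Tendsto H (nhdsWithin 0 (Set.Ioi 0)) (nhds 0) := by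
    have hexp : Filter.Tendsto (fun t : ℝ => Real.exp (-(2 * C) * t))
        (nhdsWithin 0 (Set.Ioi 0)) (nhds 1) := by
      have hcont : Continuous (fun t : ℝ => Real.exp (-(2 * C) * t)) :=
        Real.continuous_exp.comp (continuous_const.mul continuous_id)
      have := hcont.tendsto 0
      simp only [mul_zero, Real.exp_zero] at this
      exact this.mono_left nhdsWithin_le_nhds
    have h := hexp.mul hGlim
    simp only [one_mul] at h
    exact h
  -- conclude
  intro t ht
  have hHt : H t ≤ 0 := by
    apply ge_of_tendsto hHlim
    filter_upwards [self_mem_nhdsWithin, eventually_nhdsWithin_of_eventually_nhds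
      (eventually_lt_nhds ht)] with s hs hst
    exact hanti hs ht hst.le
  have hHeq : H t = 0 := le_antisymm hHt (hH0 t)
  have hGt : G t = 0 := by
    have he : 0 < Real.exp (-(2 * C) * t) := Real.exp_pos _
    have : Real.exp (-(2 * C) * t) * G t = 0 := hHeq
    exact (mul_eq_zero.mp this).resolve_left he.ne'
  have hgt : g t = 0 := by
    have htα : 0 < (t ^ (-α)) ^ 2 := pow_pos (Real.rpow_pos_of_pos ht _) 2
    have : (t ^ (-α)) ^ 2 * g t = 0 := hGt
    exact (mul_eq_zero.mp this).resolve_left htα.ne'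
  have hΦ0 : Φ t = 0 := by
    funext i
    have := (Finset.sum_eq_zero_iff_of_nonneg
      (fun i _ => Complex.normSq_nonneg (Φ t i))).mp hgt i (Finset.mem_univ i)
    exact Complex.normSq_eq_zero.mp this
  have : Ψ₁ t - Ψ₂ t = 0 := hΦ0
  exact sub_eq_zero.mp this
end
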